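/- arXiv:1109.5074 — 7 statements merged into one kernel-verified Lean document; each statement's English description precedes it below -/
import Mathlib

section
/- Let A be a matrix in SL(m,ℤ). Then there exists a positive integer n such that the trace of A^n is at least m. -/
open Polynomial Matrix

variable {m : ℕ}

lemma my_eval_charpoly (M : Matrix (Fin m) (Fin m) ℂ) (c : ℂ) :
    (M.charpoly).eval c = (Matrix.scalar (Fin m) c - M).det := by
  rw [Matrix.charpoly, eval_det, matPolyEquiv_charmatrix]
  simp

lemma det_aeval_multiset_prod (M : Matrix (Fin m) (Fin m) ℂ) (s : Multiset ℂ) :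
    ((Polynomial.aeval M) ((s.map fun b => X - C b).prod)).det
      = (s.map fun b => ((Polynomial.aeval M) (X - C b)).det).prod := by
  induction s using Multiset.induction with
  | empty => simp
  | cons a s ih =>
      simp only [Multiset.map_cons, Multiset.prod_cons, _root_.map_mul, Matrix.det_mul, ih]

lemma my_aeval_X_sub_C (M : Matrix (Fin m) (Fin m) ℂ) (b : ℂ) :
    (Polynomial.aeval M) (X - C b) = M - Matrix.scalar (Fin m) b := by
  simp [Matrix.scalar, algebraMap]

lemma det_aeval_X_sub_C (M : Matrix (Fin m) (Fin m) ℂ) (b : ℂ) :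
    ((Polynomial.aeval M) (X - C b)).det = (-1)^m * (M.charpoly.eval b) := by
  rw [my_eval_charpoly, my_aeval_X_sub_C, ← neg_sub, Matrix.det_neg, Fintype.card_fin]

lemma my_charpoly_pow (M : Matrix (Fin m) (Fin m) ℂ) (n : ℕ) (hn : 0 < n) :
    (M ^ n).charpoly = ((M.charpoly.roots.map fun l => l ^ n).map fun l => X - C l).prod := by
  have hσ : M.charpoly = (M.charpoly.roots.map fun l => X - C l).prod :=
    (IsAlgClosed.splits _).eq_prod_roots_of_monic M.charpoly_monic
  have hcard : M.charpoly.roots.card = m := by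
    rw [(splits_iff_card_roots).mp (IsAlgClosed.splits _),
      Matrix.charpoly_natDegree_eq_dim, Fintype.card_fin]
  apply Polynomial.funext
  intro c
  -- RHS value
  have hRHS : (((M.charpoly.roots.map fun l => l ^ n).map fun l => X - C l).prod).eval c
      = (M.charpoly.roots.map fun l => c - l ^ n).prod := by
    rw [eval_multiset_prod, Multiset.map_map, Multiset.map_map]
    simp
  rw [hRHS, my_eval_charpoly]
  -- the polynomial q = X^n - C c
  set q : Polynomial ℂ := X ^ n - C c with hq
  have hqm : q.Monic := monic_X_pow_sub_C c hn.ne'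
  have hqcard : q.roots.card = n := by
    rw [(splits_iff_card_roots).mp (IsAlgClosed.splits _), natDegree_X_pow_sub_C]
  have hqprod : q = (q.roots.map fun b => X - C b).prod :=
    (IsAlgClosed.splits _).eq_prod_roots_of_monic hqm
  have haq : (Polynomial.aeval M) q = M ^ n - Matrix.scalar (Fin m) c := by
    simp [hq, Matrix.scalar, algebraMap]
  have h1 : ((Polynomial.aeval M) q).det = (-1 : ℂ) ^ m * (Matrix.scalar (Fin m) c - M ^ n).det := by
    rw [haq, ← neg_sub, Matrix.det_neg, Fintype.card_fin]
  have h2 : ((Polynomial.aeval M) q).det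
      = ((-1 : ℂ) ^ m) * (M.charpoly.roots.map fun l => c - l ^ n).prod := by
    conv_lhs => rw [hqprod]
    rw [det_aeval_multiset_prod]
    have : ∀ b ∈ q.roots, ((Polynomial.aeval M) (X - C b)).det
        = (-1 : ℂ) ^ m * (M.charpoly.roots.map fun l => b - l).prod := by
      intro b _
      rw [det_aeval_X_sub_C]
      congr 1
      conv_lhs => rw [hσ]
      rw [eval_multiset_prod, Multiset.map_map]
      simp
    rw [Multiset.map_congr rfl this]
    rw [Multiset.prod_map_mul, Multiset.map_const', Multiset.prod_replicate, hqcard]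
    -- now : (-1)^m^n * Π_{b ∈ q.roots} Π_{λ} (b - λ)
    have hswap : (q.roots.map fun b => (M.charpoly.roots.map fun l => b - l).prod).prod
        = (M.charpoly.roots.map fun l => (q.roots.map fun b => b - l).prod).prod := by
      rw [← Multiset.prod_map_prod_map]
    rw [hswap]
    have hinner : ∀ l ∈ M.charpoly.roots, (q.roots.map fun b => b - l).prod
        = (-1 : ℂ) ^ n * (l ^ n - c) := by
      intro l _
      have h3 : (q.roots.map fun b => b - l) = (q.roots.map fun b => -(l - b)) :=
        Multiset.map_congr rfl (fun b _ => by ring)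
      have h4 := Multiset.prod_map_neg (q.roots.map fun b => (l - b))
      rw [Multiset.map_map] at h4
      rw [h3]
      simp only [Multiset.card_map, hqcard] at h4
      rw [show ((fun b => -(l - b)) : ℂ → ℂ) = (Neg.neg ∘ fun b => l - b) from rfl, h4]
      congr 1
      have : (q.roots.map fun b => l - b).prod = q.eval l := by
        conv_rhs => rw [hqprod]
        rw [eval_multiset_prod, Multiset.map_map]
        simp
      rw [this]
      simp [hq]
    rw [Multiset.map_congr rfl hinner, Multiset.prod_map_mul, Multiset.map_const',
      Multiset.prod_replicate, hcard]
    have : (M.charpoly.roots.map fun l => l ^ n - c).prod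
        = ((-1 : ℂ) ^ m) * (M.charpoly.roots.map fun l => c - l ^ n).prod := by
      have : (M.charpoly.roots.map fun l => l ^ n - c) =
          (M.charpoly.roots.map fun l => -(c - l ^ n)) :=
        Multiset.map_congr rfl (fun l _ => by ring)
      rw [this]
      have := Multiset.prod_map_neg (M.charpoly.roots.map fun l => c - l ^ n)
      rw [Multiset.map_map] at this
      simpa [hcard] using this
    rw [this]
    have hone : ((-1:ℂ)^m)^n * ((-1:ℂ)^n)^m = 1 := by
      rw [← pow_mul, ← pow_mul, mul_comm n m, ← pow_add, ← two_mul, pow_mul, neg_one_sq, one_pow]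
    rw [← mul_assoc, ← mul_assoc, hone, one_mul]
  rw [h1] at h2
  have hneg : ((-1 : ℂ) ^ m) ≠ 0 := by simp
  exact mul_left_cancel₀ hneg h2


noncomputable def Complex.abs : AbsoluteValue ℂ ℝ := NormedField.toAbsoluteValue ℂ

lemma Complex.norm_eq_abs (z : ℂ) : ‖z‖ = Complex.abs z := rfl

lemma Complex.abs_ofReal (r : ℝ) : Complex.abs (r : ℂ) = |r| := by
  rw [← Complex.norm_eq_abs, Complex.norm_real, Real.norm_eq_abs]

lemma Complex.abs_intCast (n : ℤ) : Complex.abs (n : ℂ) = |(n : ℝ)| := by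
  rw [← Complex.norm_eq_abs, Complex.norm_intCast]

section Approx

lemma approx_lemma (s : Multiset ℂ) (hs : ∀ z ∈ s, Complex.abs z = 1) {ε : ℝ} (hε : 0 < ε)
    (M : ℕ) : ∃ n : ℕ, M ≤ n ∧ 0 < n ∧ ∀ z ∈ s, Complex.abs (z ^ n - 1) ≤ ε := by
  classical
  set δ : ℝ := ε / 2 with hδ
  have hδ0 : 0 < δ := by positivity
  set l := s.toList with hl
  set M' := M + 1 with hM'
  set F : ℕ → (Fin l.length → ℤ × ℤ) := fun j i =>
    (⌊(l.get i ^ (j * M')).re / δ⌋, ⌊(l.get i ^ (j * M')).im / δ⌋) with hF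
  have hmem : ∀ i : Fin l.length, l.get i ∈ s := fun i => by
    rw [← Multiset.mem_toList]; exact List.get_mem l i
  have habs : ∀ (i : Fin l.length) (k : ℕ), Complex.abs (l.get i ^ k) = 1 := fun i k => by
    rw [map_pow, hs _ (hmem i), one_pow]
  have hmapsto : Set.MapsTo F Set.univ
      (Set.univ.pi fun _ : Fin l.length =>
        (Set.Icc ⌊(-1 : ℝ)/δ⌋ ⌊(1:ℝ)/δ⌋) ×ˢ (Set.Icc ⌊(-1:ℝ)/δ⌋ ⌊(1:ℝ)/δ⌋)) := by
    intro j _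
    rw [Set.mem_pi]
    intro i _
    have h1 : |(l.get i ^ (j * M')).re| ≤ 1 := by
      rw [← habs i (j * M')]; exact Complex.abs_re_le_norm _
    have h2 : |(l.get i ^ (j * M')).im| ≤ 1 := by
      rw [← habs i (j * M')]; exact Complex.abs_im_le_norm _
    rw [abs_le] at h1 h2
    constructor
    · exact Set.mem_Icc.mpr ⟨Int.floor_le_floor (by gcongr; exact h1.1),
        Int.floor_le_floor (by gcongr; exact h1.2)⟩
    · exact Set.mem_Icc.mpr ⟨Int.floor_le_floor (by gcongr; exact h2.1),
        Int.floor_le_floor (by gcongr; exact h2.2)⟩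
  have hfin : (Set.univ.pi fun _ : Fin l.length =>
      (Set.Icc ⌊(-1 : ℝ)/δ⌋ ⌊(1:ℝ)/δ⌋) ×ˢ (Set.Icc ⌊(-1:ℝ)/δ⌋ ⌊(1:ℝ)/δ⌋)).Finite :=
    Set.Finite.pi fun _ => (Set.finite_Icc _ _).prod (Set.finite_Icc _ _)
  obtain ⟨j₁, -, j₂, -, hne, hFeq⟩ :=
    Set.infinite_univ.exists_ne_map_eq_of_mapsTo hmapsto hfin
  -- wlog j₁ < j₂
  obtain ⟨a, b, hab, hFab⟩ : ∃ a b : ℕ, a < b ∧ F a = F b := by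
    rcases hne.lt_or_gt with h | h
    · exact ⟨j₁, j₂, h, hFeq⟩
    · exact ⟨j₂, j₁, h, hFeq.symm⟩
  refine ⟨(b - a) * M', ?_, ?_, ?_⟩
  · calc M ≤ M' := by omega
    _ = 1 * M' := (one_mul _).symm
    _ ≤ (b - a) * M' := by
        have : 1 ≤ b - a := by omega
        exact Nat.mul_le_mul_right _ this
  · have : 1 ≤ b - a := by omega
    positivity
  · intro z hz
    obtain ⟨i, hi⟩ : ∃ i : Fin l.length, l.get i = z := by
      rw [← List.mem_iff_get, hl, Multiset.mem_toList]; exact hz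
    subst hi
    have hkey : ∀ x y : ℝ, ⌊x / δ⌋ = ⌊y / δ⌋ → |x - y| < δ := by
      intro x y hxy
      have h1 := Int.abs_sub_lt_one_of_floor_eq_floor hxy
      have h2 : |x - y| = |x / δ - y / δ| * δ := by
        rw [div_sub_div_same, abs_div, abs_of_pos hδ0]
        field_simp
      rw [h2]
      calc |x / δ - y / δ| * δ < 1 * δ := mul_lt_mul_of_pos_right h1 hδ0
      _ = δ := one_mul δ
    have hFi := congrFun hFab i
    rw [hF] at hFi
    simp only [Prod.mk.injEq] at hFi
    have hre : |(l.get i ^ (a * M')).re - (l.get i ^ (b * M')).re| < δ := hkey _ _ hFi.1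
    have him : |(l.get i ^ (a * M')).im - (l.get i ^ (b * M')).im| < δ := hkey _ _ hFi.2
    have hdiff : Complex.abs (l.get i ^ (a * M') - l.get i ^ (b * M')) < ε := by
      calc Complex.abs (l.get i ^ (a * M') - l.get i ^ (b * M'))
          ≤ |(l.get i ^ (a * M') - l.get i ^ (b * M')).re|
            + |(l.get i ^ (a * M') - l.get i ^ (b * M')).im| :=
            Complex.norm_le_abs_re_add_abs_im _
      _ = |(l.get i ^ (a * M')).re - (l.get i ^ (b * M')).re|
            + |(l.get i ^ (a * M')).im - (l.get i ^ (b * M')).im| := by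
            simp [Complex.sub_re, Complex.sub_im]
      _ < δ + δ := add_lt_add hre him
      _ = ε := by rw [hδ]; ring
    have hfact : l.get i ^ (a * M') * (l.get i ^ ((b - a) * M') - 1)
        = -(l.get i ^ (a * M') - l.get i ^ (b * M')) := by
      rw [mul_sub, mul_one, ← pow_add, ← add_mul, Nat.add_sub_cancel' hab.le]
      ring
    have h5 := congrArg Complex.abs hfact
    rw [_root_.map_mul, habs i, one_mul, AbsoluteValue.map_neg] at h5
    rw [h5]
    exact hdiff.le

end Approx

-- extra multiset helpers
lemma my_prod_le_pow_card (t : Multiset ℝ) (c : ℝ) (h0 : ∀ x ∈ t, 0 ≤ x)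
    (hc : ∀ x ∈ t, x ≤ c) (hc0 : 0 ≤ c) : t.prod ≤ c ^ Multiset.card t := by
  induction t using Multiset.induction with
  | empty => simp
  | cons a t ih =>
      simp only [Multiset.prod_cons, Multiset.card_cons]
      have h0t : ∀ x ∈ t, 0 ≤ x := fun x hx => h0 x (Multiset.mem_cons_of_mem hx)
      have hct : ∀ x ∈ t, x ≤ c := fun x hx => hc x (Multiset.mem_cons_of_mem hx)
      have hpt : 0 ≤ t.prod := Multiset.prod_nonneg h0t
      calc a * t.prod ≤ c * c ^ Multiset.card t :=
            mul_le_mul (hc a (Multiset.mem_cons_self a t)) (ih h0t hct)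
              hpt hc0
      _ = c ^ (Multiset.card t + 1) := by rw [pow_succ]; ring

lemma my_all_eq_one : ∀ (t : Multiset ℝ), (∀ x ∈ t, 0 ≤ x) → (∀ x ∈ t, x ≤ 1) →
    t.prod = 1 → ∀ x ∈ t, x = 1 := by
  intro t
  induction t using Multiset.induction with
  | empty => intro _ _ _ x hx; simp at hx
  | cons a t ih =>
      intro h0 h1 hp x hx
      have h0t : ∀ x ∈ t, 0 ≤ x := fun x hx => h0 x (Multiset.mem_cons_of_mem hx)
      have h1t : ∀ x ∈ t, x ≤ 1 := fun x hx => h1 x (Multiset.mem_cons_of_mem hx)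
      have hpt1 : t.prod ≤ 1 := by
        simpa using my_prod_le_pow_card t 1 h0t h1t zero_le_one
      have hpt0 : 0 ≤ t.prod := Multiset.prod_nonneg h0t
      have ha1 : a ≤ 1 := h1 a (Multiset.mem_cons_self a t)
      have ha0 : 0 ≤ a := h0 a (Multiset.mem_cons_self a t)
      have hap : a * t.prod = 1 := by simpa [Multiset.prod_cons] using hp
      have haeq : a = 1 := by nlinarith
      have htp : t.prod = 1 := by nlinarith
      rcases Multiset.mem_cons.mp hx with rfl | hx
      · exact haeq
      · exact ih h0t h1t htp x hx

lemma my_sum_map_le (t : Multiset ℂ) (f g : ℂ → ℝ) (h : ∀ x ∈ t, f x ≤ g x) :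
    (t.map f).sum ≤ (t.map g).sum := by
  induction t using Multiset.induction with
  | empty => simp
  | cons a t ih =>
      simp only [Multiset.map_cons, Multiset.sum_cons]
      exact add_le_add (h a (Multiset.mem_cons_self a t))
        (ih fun x hx => h x (Multiset.mem_cons_of_mem hx))

lemma my_sum_map_sub (t : Multiset ℂ) (f g : ℂ → ℂ) :
    (t.map fun x => f x - g x).sum = (t.map f).sum - (t.map g).sum := by
  induction t using Multiset.induction with
  | empty => simp
  | cons a t ih =>
      simp only [Multiset.map_cons, Multiset.sum_cons, ih]
      ring

set_option maxHeartbeats 1000000 in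
/-- If `A ∈ SL(m, ℤ)`, then there is `n > 0` with `tr(Aⁿ) ≥ m`. -/
theorem trace_pow_ge_of_SL (m : ℕ) (A : Matrix.SpecialLinearGroup (Fin m) ℤ) :
    ∃ n : ℕ, 0 < n ∧ (m : ℤ) ≤ ((A : Matrix (Fin m) (Fin m) ℤ) ^ n).trace := by
  classical
  rcases Nat.eq_zero_or_pos m with hm | hm
  · subst hm
    exact ⟨1, one_pos, by simp [Matrix.trace]⟩
  set AM : Matrix (Fin m) (Fin m) ℤ := (A : Matrix (Fin m) (Fin m) ℤ) with hAM
  set B : Matrix (Fin m) (Fin m) ℂ := ((Int.castRingHom ℂ).mapMatrix AM) with hB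
  have hBpow : ∀ n : ℕ, B ^ n = (Int.castRingHom ℂ).mapMatrix (AM ^ n) := fun n => by
    rw [hB, ← map_pow]
  have htr : ∀ n : ℕ, (((AM ^ n).trace : ℤ) : ℂ) = (B ^ n).trace := fun n => by
    rw [hBpow]
    simp [Matrix.trace, RingHom.mapMatrix_apply, Matrix.diag, Matrix.map_apply]
  set σ : Multiset ℂ := B.charpoly.roots with hσdef
  have hcard : Multiset.card σ = m := by
    rw [hσdef, (Polynomial.splits_iff_card_roots).mp (IsAlgClosed.splits _),
      Matrix.charpoly_natDegree_eq_dim, Fintype.card_fin]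
  have hdet : B.det = 1 := by
    rw [hB, ← RingHom.map_det]
    have : AM.det = 1 := A.prop
    rw [this]
    simp
  have hprodσ : σ.prod = 1 := by
    rw [hσdef, ← Matrix.det_eq_prod_roots_charpoly, hdet]
  have key : ∀ n : ℕ, 0 < n → (((AM ^ n).trace : ℤ) : ℂ) = (σ.map fun l => l ^ n).sum := by
    intro n hn
    rw [htr n, Matrix.trace_eq_sum_roots_charpoly, my_charpoly_pow B n hn,
      Polynomial.roots_multiset_prod_X_sub_C]
  have habsprod : (σ.map Complex.abs).prod = 1 := by
    rw [← map_multiset_prod Complex.abs σ, hprodσ]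
    simp
  have hnonneg : ∀ x ∈ σ.map Complex.abs, (0:ℝ) ≤ x := by
    intro x hx
    obtain ⟨z, _, rfl⟩ := Multiset.mem_map.mp hx
    exact AbsoluteValue.nonneg _ _
  have hσne : σ ≠ 0 := by
    intro h
    rw [h] at hcard
    simp at hcard
    omega
  obtain ⟨z₀, hz₀⟩ := Multiset.exists_mem_of_ne_zero hσne
  set T0 : Finset ℝ := σ.toFinset.image Complex.abs with hT0
  have hT0ne : T0.Nonempty := ⟨Complex.abs z₀,
    Finset.mem_image_of_mem _ (Multiset.mem_toFinset.mpr hz₀)⟩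
  set r : ℝ := T0.max' hT0ne with hrdef
  have hler : ∀ z ∈ σ, Complex.abs z ≤ r := fun z hz =>
    Finset.le_max' _ _ (Finset.mem_image_of_mem _ (Multiset.mem_toFinset.mpr hz))
  have hrmem : ∃ z ∈ σ, Complex.abs z = r := by
    obtain ⟨z, hz, hzr⟩ := Finset.mem_image.mp (T0.max'_mem hT0ne)
    exact ⟨z, Multiset.mem_toFinset.mp hz, hzr⟩
  have hr0 : 0 ≤ r := by
    obtain ⟨z, _, hzr⟩ := hrmem
    rw [← hzr]
    exact AbsoluteValue.nonneg _ _
  have hr1 : 1 ≤ r := by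
    by_contra h
    push_neg at h
    have hb := my_prod_le_pow_card (σ.map Complex.abs) r hnonneg
      (fun x hx => by
        obtain ⟨z, hz, rfl⟩ := Multiset.mem_map.mp hx
        exact hler z hz) hr0
    rw [habsprod, Multiset.card_map, hcard] at hb
    have : r ^ m < 1 := pow_lt_one₀ hr0 h hm.ne'
    linarith
  rcases eq_or_lt_of_le hr1 with hre1 | hrgt
  · -- all eigenvalues on the unit circle
    have hall1 : ∀ z ∈ σ, Complex.abs z = 1 := by
      intro z hz
      exact my_all_eq_one (σ.map Complex.abs) hnonneg
        (fun x hx => by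
          obtain ⟨w, hw, rfl⟩ := Multiset.mem_map.mp hx
          rw [hre1]; exact hler w hw) habsprod _ (Multiset.mem_map_of_mem _ hz)
    have hε : (0:ℝ) < 1/(2*m) := by positivity
    obtain ⟨n, -, hn0, happ⟩ := approx_lemma σ hall1 hε 1
    refine ⟨n, hn0, ?_⟩
    have hsum : Complex.abs ((σ.map fun l => l ^ n).sum - m) ≤ 1/2 := by
      have hconst : ((m:ℂ)) = (σ.map fun _ => (1:ℂ)).sum := by
        rw [Multiset.map_const', Multiset.sum_replicate, hcard]
        simp
      rw [hconst, ← my_sum_map_sub]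
      calc Complex.abs ((σ.map fun x => x ^ n - 1).sum)
          ≤ ((σ.map fun x => x ^ n - 1).map norm).sum := by
            rw [← Complex.norm_eq_abs]
            exact norm_multiset_sum_le _
      _ = (σ.map fun x => Complex.abs (x ^ n - 1)).sum := by
            rw [Multiset.map_map]
            rfl
      _ ≤ (σ.map fun _ => 1/(2*(m:ℝ))).sum := my_sum_map_le _ _ _ fun x hx => happ x hx
      _ = Multiset.card σ • (1/(2*(m:ℝ))) := by rw [Multiset.map_const', Multiset.sum_replicate]
      _ = 1/2 := by
            rw [hcard, nsmul_eq_mul]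
            field_simp
    rw [← key n hn0] at hsum
    have hzint : ((((AM ^ n).trace - m : ℤ)) : ℂ) = (((AM ^ n).trace : ℤ) : ℂ) - m := by
      push_cast
      ring
    rw [← hzint, Complex.abs_intCast] at hsum
    have habs1 : |((AM ^ n).trace - m : ℤ)| < 1 := by
      have h8 : |(((AM ^ n).trace - m : ℤ) : ℝ)| < 1 := by
        calc |(((AM ^ n).trace - m : ℤ) : ℝ)| ≤ 1/2 := hsum
        _ < 1 := by norm_num
      exact_mod_cast h8
    rw [abs_lt] at habs1
    omega
  · -- r > 1 case
    set T : Multiset ℂ := σ.filter (fun z => Complex.abs z = r) with hT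
    set S : Multiset ℂ := σ.filter (fun z => ¬ Complex.abs z = r) with hS
    have hTS : T + S = σ := Multiset.filter_add_not _ _
    have hTne : T ≠ 0 := by
      obtain ⟨z, hz, hzr⟩ := hrmem
      intro h
      have : z ∈ T := Multiset.mem_filter.mpr ⟨hz, hzr⟩
      rw [h] at this
      simp at this
    obtain ⟨w₀, hw₀⟩ := Multiset.exists_mem_of_ne_zero hTne
    -- second largest modulus bound
    set F2 : Finset ℝ := insert 0 (S.toFinset.image Complex.abs) with hF2
    have hF2ne : F2.Nonempty := ⟨0, Finset.mem_insert_self _ _⟩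
    set r₂ : ℝ := F2.max' hF2ne with hr₂def
    have hr₂0 : 0 ≤ r₂ := Finset.le_max' _ _ (Finset.mem_insert_self _ _)
    have hSle : ∀ z ∈ S, Complex.abs z ≤ r₂ := fun z hz =>
      Finset.le_max' _ _ (Finset.mem_insert_of_mem
        (Finset.mem_image_of_mem _ (Multiset.mem_toFinset.mpr hz)))
    have hr₂r : r₂ < r := by
      rw [hr₂def]
      apply Finset.max'_lt_iff _ hF2ne |>.mpr
      intro y hy
      rcases Finset.mem_insert.mp hy with rfl | hy
      · linarith
      · obtain ⟨z, hz, rfl⟩ := Finset.mem_image.mp hy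
        have hzS : z ∈ S := Multiset.mem_toFinset.mp hz
        have hzσ : z ∈ σ := Multiset.mem_of_mem_filter hzS
        have hzne : ¬ Complex.abs z = r := (Multiset.mem_filter.mp hzS).2
        exact lt_of_le_of_ne (hler z hzσ) hzne
    have hrpos : (0:ℝ) < r := by linarith
    -- choose M₀ with growth properties
    have hq1 : r₂ / r < 1 := (div_lt_one hrpos).mpr hr₂r
    have hq0 : 0 ≤ r₂ / r := div_nonneg hr₂0 hrpos.le
    have hev1 : ∀ᶠ n in Filter.atTop, (r₂/r) ^ n < 1/(4*(m:ℝ)+4) := by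
      have := tendsto_pow_atTop_nhds_zero_of_lt_one hq0 hq1
      exact this.eventually_lt_const (by positivity)
    have hev2 : ∀ᶠ n in Filter.atTop, (8*(m:ℝ)+8) ≤ r ^ n := by
      have := tendsto_pow_atTop_atTop_of_one_lt hrgt
      exact this.eventually_ge_atTop _
    obtain ⟨M₀, hM₀⟩ := (hev1.and hev2).exists_forall_of_atTop
    -- unit circle elements T/r
    have hTunit : ∀ z ∈ T.map (fun z => z / (r:ℂ)), Complex.abs z = 1 := by
      intro z hz
      obtain ⟨w, hw, rfl⟩ := Multiset.mem_map.mp hz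
      have hwr : Complex.abs w = r := (Multiset.mem_filter.mp hw).2
      rw [map_div₀, hwr, Complex.abs_ofReal, abs_of_pos hrpos, div_self hrpos.ne']
    obtain ⟨n, hnM, hn0, happ⟩ := approx_lemma _ hTunit (by norm_num : (0:ℝ) < 1/2) M₀
    obtain ⟨hgrow1, hgrow2⟩ := hM₀ n hnM
    refine ⟨n, hn0, ?_⟩
    -- real part estimates
    have hTre : ∀ z ∈ T, r ^ n / 2 ≤ (z ^ n).re := by
      intro z hz
      have h1 := happ (z / (r:ℂ)) (Multiset.mem_map_of_mem _ hz)
      have hzr : Complex.abs z = r := (Multiset.mem_filter.mp hz).2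
      have hre : (1:ℝ)/2 ≤ ((z / (r:ℂ)) ^ n).re := by
        have := Complex.abs_re_le_norm ((z / (r:ℂ)) ^ n - 1)
        have h2 : |((z / (r:ℂ)) ^ n).re - 1| ≤ 1/2 := by
          calc |((z / (r:ℂ)) ^ n).re - 1| = |(((z / (r:ℂ)) ^ n) - 1).re| := by
                simp [Complex.sub_re]
          _ ≤ Complex.abs (((z / (r:ℂ)) ^ n) - 1) := Complex.abs_re_le_norm _
          _ ≤ 1/2 := h1
        rw [abs_le] at h2
        linarith [h2.1]
      have hzpow : z ^ n = ((z / (r:ℂ)) ^ n) * ((r:ℝ) : ℂ) ^ n := by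
        rw [div_pow, div_mul_cancel₀]
        exact pow_ne_zero _ (by
          simp only [ne_eq, Complex.ofReal_eq_zero]
          exact hrpos.ne')
      rw [hzpow]
      have hmulre : (((z / (r:ℂ)) ^ n) * ((r:ℝ) : ℂ) ^ n).re
          = ((z / (r:ℂ)) ^ n).re * r ^ n := by
        rw [← Complex.ofReal_pow, mul_comm, Complex.re_ofReal_mul, mul_comm]
      rw [hmulre]
      calc r ^ n / 2 = (1/2) * r ^ n := by ring
      _ ≤ ((z / (r:ℂ)) ^ n).re * r ^ n := by
          apply mul_le_mul_of_nonneg_right hre (by positivity)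
    have hSre : ∀ z ∈ S, -(r₂ ^ n) ≤ (z ^ n).re := by
      intro z hz
      have h1 : |(z ^ n).re| ≤ r₂ ^ n := by
        calc |(z ^ n).re| ≤ Complex.abs (z ^ n) := Complex.abs_re_le_norm _
        _ = (Complex.abs z) ^ n := map_pow _ _ _
        _ ≤ r₂ ^ n := pow_le_pow_left₀ (AbsoluteValue.nonneg _ _) (hSle z hz) n
      rw [abs_le] at h1
      linarith [h1.1]
    -- sum the real parts
    have hsplit : (σ.map fun l => l ^ n) = (T.map fun l => l ^ n) + (S.map fun l => l ^ n) := by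
      rw [← hTS, Multiset.map_add]
    have hre_sum : ((σ.map fun l => l ^ n).sum).re
        = ((T.map fun l => l ^ n).map Complex.re).sum + ((S.map fun l => l ^ n).map Complex.re).sum := by
      rw [hsplit, Multiset.sum_add]
      rw [Complex.add_re]
      congr 1
      · exact map_multiset_sum Complex.reAddGroupHom _
      · exact map_multiset_sum Complex.reAddGroupHom _
    have hcardT : 0 < Multiset.card T := Multiset.card_pos.mpr hTne
    have hcardTS : Multiset.card T + Multiset.card S = m := by
      rw [← Multiset.card_add, hTS, hcard]
    have hsum1 : ((T.map fun l => l ^ n).map Complex.re).sum ≥ (Multiset.card T : ℝ) * (r ^ n / 2) := by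
      rw [Multiset.map_map]
      have h := my_sum_map_le T (fun _ => r ^ n / 2) (fun l => (l ^ n).re) hTre
      rw [Multiset.map_const', Multiset.sum_replicate, nsmul_eq_mul] at h
      simpa [Function.comp] using h
    have hsum2 : ((S.map fun l => l ^ n).map Complex.re).sum ≥ -((m:ℝ) * r₂ ^ n) := by
      rw [Multiset.map_map]
      have h := my_sum_map_le S (fun _ => -(r₂ ^ n)) (fun l => (l ^ n).re) hSre
      rw [Multiset.map_const', Multiset.sum_replicate, nsmul_eq_mul] at h
      have hcards : (Multiset.card S : ℝ) ≤ m := by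
        have : Multiset.card S ≤ m := by omega
        exact_mod_cast this
      have hr₂n : (0:ℝ) ≤ r₂ ^ n := by positivity
      calc -((m:ℝ) * r₂ ^ n) ≤ (Multiset.card S : ℝ) * -(r₂ ^ n) := by nlinarith
      _ ≤ _ := by simpa [Function.comp] using h
    have hm1 : (1:ℝ) ≤ (m:ℝ) := by exact_mod_cast hm
    have hrn : (0:ℝ) < r ^ n := by positivity
    have hr₂pow : (m:ℝ) * r₂ ^ n ≤ r ^ n / 4 := by
      have h1 : r₂ ^ n = (r₂ / r) ^ n * r ^ n := by
        rw [div_pow]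
        field_simp
      have h2 : r₂ ^ n < 1 / (4*(m:ℝ)+4) * r ^ n := by
        rw [h1]
        exact mul_lt_mul_of_pos_right hgrow1 hrn
      have hm4 : (0:ℝ) < 4*(m:ℝ)+4 := by positivity
      have h3 : (m:ℝ) * r₂ ^ n ≤ (m:ℝ) * (1 / (4*(m:ℝ)+4) * r ^ n) := by
        have hr₂n : (0:ℝ) ≤ r₂ ^ n := by positivity
        nlinarith
      calc (m:ℝ) * r₂ ^ n ≤ (m:ℝ) * (1 / (4*(m:ℝ)+4) * r ^ n) := h3
      _ = ((m:ℝ) / (4*(m:ℝ)+4)) * r ^ n := by ring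
      _ ≤ (1/4) * r ^ n := by
          apply mul_le_mul_of_nonneg_right _ hrn.le
          rw [div_le_iff₀ hm4]
          nlinarith
      _ = r ^ n / 4 := by ring
    have hfinal : (m:ℝ) ≤ ((σ.map fun l => l ^ n).sum).re := by
      rw [hre_sum]
      have h4 : (Multiset.card T : ℝ) * (r ^ n / 2) ≥ r ^ n / 2 := by
        have h5 : (1:ℝ) ≤ (Multiset.card T : ℝ) := by exact_mod_cast hcardT
        nlinarith
      nlinarith [hsum1, hsum2, hr₂pow, hgrow2]
    have hcast := key n hn0
    have hreint : (((AM ^ n).trace : ℤ) : ℝ) = ((σ.map fun l => l ^ n).sum).re := by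
      rw [← hcast, Complex.intCast_re]
    rw [← hreint] at hfinal
    exact_mod_cast hfinal
end

section
/- Let f be a homeomorphism of a compact metric space X with the shadowing property, and suppose X is expansive. Then the periodic points of f are dense in the nonwandering set of f. -/
open Topology

/-- `f` has the shadowing property: every `δ`-pseudo-orbit is `ε`-shadowed by a true orbit. -/
def ShadowingProperty {X : Type*} [MetricSpace X] (f : X ≃ₜ X) : Prop :=
  ∀ ε > (0 : ℝ), ∃ δ > (0 : ℝ), ∀ x : ℤ → X,
    (∀ n : ℤ, dist (f (x n)) (x (n + 1)) < δ) →
    ∃ y : X, ∀ n : ℤ, dist ((f.toEquiv ^ n) y) (x n) < ε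

/-- `f` is expansive with some expansivity constant `c > 0`. -/
def Expansive {X : Type*} [MetricSpace X] (f : X ≃ₜ X) : Prop :=
  ∃ c > (0 : ℝ), ∀ x y : X,
    (∀ n : ℤ, dist ((f.toEquiv ^ n) x) ((f.toEquiv ^ n) y) ≤ c) → x = y

/-- `x` is a nonwandering point of `f`. -/
def IsNonWandering {X : Type*} [TopologicalSpace X] (f : X → X) (x : X) : Prop :=
  ∀ U ∈ 𝓝 x, ∃ n : ℕ, 0 < n ∧ (f^[n] '' U ∩ U).Nonempty

/-- A homeomorphism of a compact metric space with the shadowing property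
which is expansive has its periodic points dense in the nonwandering set. -/
theorem periodicPoints_dense_in_nonwandering {X : Type*} [MetricSpace X] [CompactSpace X]
    (f : X ≃ₜ X) (hsh : ShadowingProperty f) (hexp : Expansive f) :
    {x : X | IsNonWandering (⇑f) x} ⊆
      closure {p : X | ∃ k : ℕ, 0 < k ∧ (⇑f)^[k] p = p} := by
  have hpow : ∀ (m : ℕ) (a : X), (f.toEquiv ^ m) a = (⇑f)^[m] a := by
    intro m
    induction m with
    | zero => intro a; rfl
    | succ m ih =>
      intro a
      rw [pow_succ, Function.iterate_succ_apply]
      exact ih (f a)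
  intro x hx
  rw [Metric.mem_closure_iff]
  intro ε hε
  obtain ⟨c, hc, hexpc⟩ := hexp
  set ε₀ : ℝ := min (ε / 4) (c / 2) with hε₀def
  have hε₀ : 0 < ε₀ := lt_min (by linarith) (by linarith)
  obtain ⟨δ, hδ, hshδ⟩ := hsh ε₀ hε₀
  set r : ℝ := min (δ / 3) (ε / 4) with hrdef
  have hr : 0 < r := lt_min (by linarith) (by linarith)
  obtain ⟨n, hn, w, ⟨u, hu, rfl⟩, hw⟩ := hx (Metric.ball x r) (Metric.ball_mem_nhds x hr)
  rw [Metric.mem_ball] at hu hw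
  have hnz : (n : ℤ) ≠ 0 := by exact_mod_cast hn.ne'
  have hnpos : (0 : ℤ) < n := by exact_mod_cast hn
  -- the periodic pseudo-orbit
  set z : ℤ → X := fun k => (⇑f)^[(k % (n : ℤ)).toNat] u with hz
  have hmod : ∀ k : ℤ, 0 ≤ k % (n : ℤ) ∧ k % (n : ℤ) < n := fun k =>
    ⟨Int.emod_nonneg k hnz, Int.emod_lt_of_pos k hnpos⟩
  have hper : ∀ k : ℤ, z (k + n) = z k := by
    intro k
    have h : (k + (n : ℤ)) % n = k % n := by simp
    simp only [hz, h]
  have hps : ∀ k : ℤ, dist (f (z k)) (z (k + 1)) < δ := by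
    intro k
    obtain ⟨h0, h1⟩ := hmod k
    have hstep : f (z k) = (⇑f)^[(k % (n : ℤ)).toNat + 1] u := by
      rw [Function.iterate_succ_apply']
    have hsucc : (k + 1) % (n : ℤ) = (k % n + 1) % n := (Int.emod_add_emod k n 1).symm
    by_cases hcase : k % (n : ℤ) + 1 < n
    · have he : (k + 1) % (n : ℤ) = k % n + 1 := by
        rw [hsucc]; exact Int.emod_eq_of_lt (by omega) hcase
      have : z (k + 1) = (⇑f)^[(k % (n : ℤ)).toNat + 1] u := by
        simp only [hz, he]
        congr 1
        omega
      rw [this, ← hstep, dist_self]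
      exact hδ
    · have heq : k % (n : ℤ) + 1 = n := by omega
      have he : (k + 1) % (n : ℤ) = 0 := by rw [hsucc, heq, Int.emod_self]
      have hz1 : z (k + 1) = u := by simp [hz, he]
      have hz2 : f (z k) = (⇑f)^[n] u := by
        rw [hstep]; congr 1; omega
      rw [hz1, hz2]
      calc dist ((⇑f)^[n] u) u ≤ dist ((⇑f)^[n] u) x + dist x u := dist_triangle _ _ _
        _ < r + r := by rw [dist_comm x u]; exact add_lt_add hw hu
        _ < δ := by
          have : r ≤ δ / 3 := min_le_left _ _
          linarith
  obtain ⟨y, hy⟩ := hshδ z hps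
  -- y is periodic with period n
  have key : (f.toEquiv ^ (n : ℤ)) y = y := by
    apply hexpc
    intro m
    have hcomp : (f.toEquiv ^ m) ((f.toEquiv ^ (n : ℤ)) y) = (f.toEquiv ^ (m + n)) y := by
      rw [zpow_add]; rfl
    rw [hcomp]
    refine le_of_lt ?_
    calc dist ((f.toEquiv ^ (m + (n : ℤ))) y) ((f.toEquiv ^ m) y)
        ≤ dist ((f.toEquiv ^ (m + (n : ℤ))) y) (z (m + n)) +
          dist (z (m + n)) ((f.toEquiv ^ m) y) := dist_triangle _ _ _
      _ < ε₀ + ε₀ := by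
          refine add_lt_add (hy (m + n)) ?_
          rw [hper m, dist_comm]
          exact hy m
      _ ≤ c := by
          have : ε₀ ≤ c / 2 := min_le_right _ _
          linarith
  have hyper : (⇑f)^[n] y = y := by
    have : (f.toEquiv ^ (n : ℤ)) y = (f.toEquiv ^ n) y := by
      rw [zpow_natCast]
    rw [this, hpow] at key
    exact key
  refine ⟨y, ⟨n, hn, hyper⟩, ?_⟩
  have hy0 : dist y (z 0) < ε₀ := by
    have := hy 0
    rwa [zpow_zero] at this
  have hz0 : z 0 = u := by simp [hz]
  rw [hz0] at hy0
  calc dist x y ≤ dist x u + dist u y := dist_triangle _ _ _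
    _ < r + ε₀ := add_lt_add (by rw [dist_comm]; exact hu) (by rw [dist_comm]; exact hy0)
    _ < ε := by
        have h1 : r ≤ ε / 4 := min_le_right _ _
        have h2 : ε₀ ≤ ε / 4 := min_le_left _ _
        linarith
end

section
/- Let f: X → X be a homeomorphism of a compact metric space with the shadowing property. Then the closure of the recurrent set of f equals the chain recurrent set of f. -/
/-- `x` is recurrent: it belongs to its own ω-limit set. -/
def IsRecurrentPt {X : Type*} [MetricSpace X] (f : X → X) (x : X) : Prop :=
  ∀ ε > (0 : ℝ), ∀ N : ℕ, ∃ n : ℕ, N ≤ n ∧ dist (f^[n] x) x < ε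

/-- `x` is chain recurrent: for every `ε > 0` there is a finite `ε`-pseudo-orbit from `x`
to itself. -/
def IsChainRecurrentPt {X : Type*} [MetricSpace X] (f : X → X) (x : X) : Prop :=
  ∀ ε > (0 : ℝ), ∃ n : ℕ, 1 ≤ n ∧ ∃ c : ℕ → X, c 0 = x ∧ c n = x ∧
    ∀ i < n, dist (f (c i)) (c (i + 1)) < ε

/-- Birkhoff: a nonempty closed forward-invariant set contains a recurrent point. -/
lemma birkhoff_recurrent {X : Type*} [MetricSpace X] [CompactSpace X] (g : X → X)
    (hg : Continuous g) (S : Set X) (hSc : IsClosed S) (hSne : S.Nonempty)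
    (hinv : g '' S ⊆ S) :
    ∃ z ∈ S, (∀ ε > (0 : ℝ), ∀ N : ℕ, ∃ n : ℕ, N ≤ n ∧ dist (g^[n] z) z < ε) := by
  set 𝒮 : Set (Set X) := {T | T ⊆ S ∧ IsClosed T ∧ T.Nonempty ∧ g '' T ⊆ T} with h𝒮
  have hzorn : ∀ c ⊆ 𝒮, IsChain (· ⊆ ·) c → c.Nonempty →
      ∃ lb ∈ 𝒮, ∀ s ∈ c, lb ⊆ s := by
    intro c hcS hchain hcne
    refine ⟨⋂₀ c, ⟨?_, ?_, ?_, ?_⟩, fun s hs => Set.sInter_subset_of_mem hs⟩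
    · obtain ⟨t, ht⟩ := hcne; exact (Set.sInter_subset_of_mem ht).trans (hcS ht).1
    · exact isClosed_sInter fun t ht => (hcS ht).2.1
    · have : Nonempty c := Set.Nonempty.to_subtype hcne
      have hdir : DirectedOn (· ⊇ ·) c := by
        intro a ha b hb
        rcases eq_or_ne a b with rfl | h
        · exact ⟨a, ha, Set.Subset.refl a, Set.Subset.refl a⟩
        · rcases hchain ha hb h with h' | h'
          · exact ⟨a, ha, Set.Subset.refl a, h'⟩
          · exact ⟨b, hb, h', Set.Subset.refl b⟩
      exact IsCompact.nonempty_sInter_of_directed_nonempty_isCompact_isClosed hdir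
        (fun U hU => (hcS hU).2.2.1) (fun U hU => (hcS hU).2.1.isCompact)
        (fun U hU => (hcS hU).2.1)
    · rintro w ⟨v, hv, rfl⟩ t ht
      exact (hcS ht).2.2.2 ⟨v, hv t ht, rfl⟩
  obtain ⟨M, hMS, hMmin⟩ := zorn_superset_nonempty 𝒮 hzorn S ⟨le_refl S, hSc, hSne, hinv⟩
  obtain ⟨hM1, hM2, ⟨z, hz⟩, hM4⟩ := hMmin.prop
  refine ⟨z, hM1 hz, ?_⟩
  intro ε hε N
  have horb : ∀ m : ℕ, g^[m] z ∈ M := by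
    intro m
    induction m with
    | zero => exact hz
    | succ k ih =>
      rw [Function.iterate_succ_apply']
      exact hM4 ⟨_, ih, rfl⟩
  set O : Set X := {w | ∃ m : ℕ, N ≤ m ∧ g^[m] z = w} with hO
  have hOM : closure O ⊆ M := by
    apply hM2.closure_subset_iff.mpr
    rintro w ⟨m, _, rfl⟩; exact horb m
  have hT : closure O ∈ 𝒮 := by
    refine ⟨hOM.trans hM1, isClosed_closure, ?_, ?_⟩
    · exact ⟨g^[N] z, subset_closure ⟨N, le_refl N, rfl⟩⟩
    · have h1 : g '' closure O ⊆ closure (g '' O) := image_closure_subset_closure_image hg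
      have h2 : g '' O ⊆ O := by
        rintro w ⟨v, ⟨m, hm, rfl⟩, rfl⟩
        exact ⟨m + 1, by omega, Function.iterate_succ_apply' g m z⟩
      exact h1.trans (closure_mono h2)
  have hMeq : closure O = M := (hMmin.eq_of_ge hT hOM).symm
  have hzO : z ∈ closure O := hMeq ▸ hz
  rw [Metric.mem_closure_iff] at hzO
  obtain ⟨w, ⟨m, hm, rfl⟩, hd⟩ := hzO ε hε
  exact ⟨m, hm, by rwa [dist_comm]⟩


/-- recurrent points are chain recurrent -/
lemma recurrent_imp_chainRecurrent {X : Type*} [MetricSpace X] (f : X → X) (x : X)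
    (hx : IsRecurrentPt f x) : IsChainRecurrentPt f x := by
  intro ε hε
  obtain ⟨n, hn, hd⟩ := hx ε hε 1
  refine ⟨n, hn, fun i => if i < n then f^[i] x else x, by simp [hn], by simp, ?_⟩
  intro i hi
  simp only [if_pos hi]
  rcases lt_or_eq_of_le (Nat.succ_le_of_lt hi) with h | h
  · simp only [if_pos h, ← Function.iterate_succ_apply' f i x, dist_self]
    exact hε
  · rw [if_neg (by omega), ← Function.iterate_succ_apply' f i x, h]
    exact hd

/-- the chain recurrent set is closed -/
lemma isClosed_chainRecurrent {X : Type*} [MetricSpace X] [CompactSpace X] (f : X → X)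
    (hf : Continuous f) : IsClosed {x : X | IsChainRecurrentPt f x} := by
  rw [← closure_eq_iff_isClosed]
  apply Set.Subset.antisymm _ subset_closure
  intro x hx
  intro ε hε
  have huc : UniformContinuous f := CompactSpace.uniformContinuous_of_continuous hf
  rw [Metric.uniformContinuous_iff] at huc
  obtain ⟨δ, hδ, hucd⟩ := huc (ε / 3) (by linarith)
  set δ' := min δ (ε / 3) with hδ'
  have hδ'0 : (0:ℝ) < δ' := lt_min hδ (by linarith)
  rw [Metric.mem_closure_iff] at hx
  obtain ⟨y, hyCR, hxy⟩ := hx δ' hδ'0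
  obtain ⟨n, hn, c, hc0, hcn, hstep⟩ := hyCR (ε / 3) (by linarith)
  refine ⟨n, hn, fun i => if i = 0 ∨ i = n then x else c i, by simp, by simp, ?_⟩
  intro i hi
  beta_reduce
  have hxyδ : dist x y < δ := lt_of_lt_of_le hxy (min_le_left _ _)
  have hxyε : dist x y < ε / 3 := lt_of_lt_of_le hxy (min_le_right _ _)
  have hffxy : dist (f x) (f y) < ε / 3 := hucd hxyδ
  by_cases h0 : i = 0
  · subst h0
    simp only [if_pos (Or.inl rfl)]
    by_cases h1 : 1 = n
    · rw [if_pos (Or.inr h1)]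
      have h2 : dist (f y) (c 1) < ε / 3 := by rw [← hc0]; exact hstep 0 hi
      have h3 : dist (c 1) x = dist x y := by rw [h1, hcn, dist_comm]
      calc dist (f x) x ≤ dist (f x) (f y) + dist (f y) (c 1) + dist (c 1) x :=
            dist_triangle4 _ _ _ _
        _ < ε / 3 + ε / 3 + ε / 3 := by rw [h3]; linarith
        _ = ε := by ring
    · rw [if_neg (show ¬(0 + 1 = 0 ∨ 0 + 1 = n) by omega)]
      have h2 : dist (f y) (c 1) < ε / 3 := by rw [← hc0]; exact hstep 0 hi
      calc dist (f x) (c (0 + 1)) ≤ dist (f x) (f y) + dist (f y) (c (0 + 1)) := dist_triangle _ _ _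
        _ < ε := by linarith
  · rw [if_neg (show ¬(i = 0 ∨ i = n) by omega)]
    by_cases h1 : i + 1 = n
    · rw [if_pos (Or.inr h1)]
      have h2 : dist (f (c i)) (c (i + 1)) < ε / 3 := hstep i hi
      have h3 : dist (c (i + 1)) x = dist x y := by rw [h1, hcn, dist_comm]
      calc dist (f (c i)) x ≤ dist (f (c i)) (c (i + 1)) + dist (c (i + 1)) x :=
            dist_triangle _ _ _
        _ < ε := by rw [h3]; linarith
    · rw [if_neg (show ¬(i + 1 = 0 ∨ i + 1 = n) by omega)]
      exact lt_trans (hstep i hi) (by linarith)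


lemma chainRecurrent_mem_closure {X : Type*} [MetricSpace X] [CompactSpace X]
    (f : X ≃ₜ X) (hsh : ShadowingProperty f) (x : X) (hx : IsChainRecurrentPt (⇑f) x) :
    x ∈ closure {x : X | IsRecurrentPt (⇑f) x} := by
  rw [Metric.mem_closure_iff]
  intro ε hε
  obtain ⟨δ, hδ, hshad⟩ := hsh (ε / 2) (by linarith)
  obtain ⟨n, hn, c, hc0, hcn, hstep⟩ := hx δ hδ
  have hn0 : (0:ℤ) < (n:ℤ) := by exact_mod_cast hn
  set p : ℤ → X := fun k => c ((k % (n:ℤ)).toNat) with hp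
  have hpseudo : ∀ k : ℤ, dist (f (p k)) (p (k + 1)) < δ := by
    intro k
    have hr0 : 0 ≤ k % (n:ℤ) := Int.emod_nonneg k (by omega)
    have hrn : k % (n:ℤ) < n := Int.emod_lt_of_pos k hn0
    set i : ℕ := (k % (n:ℤ)).toNat with hi
    have hiv : (i : ℤ) = k % (n:ℤ) := Int.toNat_of_nonneg hr0
    have hilt : i < n := by omega
    have hk1 : (k + 1) % (n:ℤ) = ((i:ℤ) + 1) % n := by
      have hkd : k + 1 = ((i:ℤ) + 1) + (n:ℤ) * (k / n) := by
        have := Int.emod_add_mul_ediv k (n:ℤ); omega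
      rw [hkd, Int.add_mul_emod_self_left]
    have key : p (k + 1) = c (i + 1) := by
      rcases lt_or_eq_of_le (Nat.succ_le_of_lt hilt) with h | h
      · have : (k + 1) % (n:ℤ) = (i:ℤ) + 1 := by
          rw [hk1]; exact Int.emod_eq_of_lt (by omega) (by exact_mod_cast h)
        simp only [hp, this]
        norm_num
      · have : (k + 1) % (n:ℤ) = 0 := by
          rw [hk1]
          have : (i:ℤ) + 1 = (n:ℤ) := by exact_mod_cast h
          rw [this, Int.emod_self]
        simp only [hp, this, Int.toNat_zero]
        rw [hc0, ← hcn, ← h]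
    rw [key]
    exact hstep i hilt
  obtain ⟨y, hy⟩ := hshad p hpseudo
  -- orbit points f^[m*n] y are all within ε/2 of x
  have hpow : ∀ k : ℕ, (f.toEquiv ^ (k:ℤ)) y = f^[k] y := by
    intro k
    rw [zpow_natCast, ← Equiv.Perm.iterate_eq_pow]
    rfl
  have horb : ∀ m : ℕ, dist (f^[m * n] y) x < ε / 2 := by
    intro m
    have h1 := hy ((m * n : ℕ) : ℤ)
    rw [hpow] at h1
    have h2 : ((m * n : ℕ) : ℤ) % (n:ℤ) = 0 := by
      push_cast
      simp [Int.mul_emod_right]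
    have h3 : p ((m * n : ℕ) : ℤ) = x := by
      simp only [hp]
      rw [h2]
      simp [hc0]
    rwa [h3] at h1
  set O : Set X := {w | ∃ m : ℕ, f^[m * n] y = w} with hO
  have hOball : closure O ⊆ Metric.closedBall x (ε / 2) := by
    apply closure_minimal _ Metric.isClosed_closedBall
    rintro w ⟨m, rfl⟩
    exact Metric.mem_closedBall.mpr (le_of_lt (horb m))
  have hinvO : f^[n] '' closure O ⊆ closure O := by
    have h1 : f^[n] '' closure O ⊆ closure (f^[n] '' O) :=
      image_closure_subset_closure_image (f.continuous.iterate n)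
    have h2 : f^[n] '' O ⊆ O := by
      rintro w ⟨v, ⟨m, rfl⟩, rfl⟩
      exact ⟨m + 1, by rw [← Function.iterate_add_apply]; ring_nf⟩
    exact h1.trans (closure_mono h2)
  obtain ⟨z, hzS, hzrec⟩ := birkhoff_recurrent (f^[n])
    (f.continuous.iterate n) (closure O) isClosed_closure
    ⟨y, subset_closure ⟨0, by simp⟩⟩ hinvO
  refine ⟨z, ?_, ?_⟩
  · intro ε' hε' N
    obtain ⟨m, hm, hd⟩ := hzrec ε' hε' N
    refine ⟨m * n, le_trans hm (Nat.le_mul_of_pos_right m (by omega)), ?_⟩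
    rw [mul_comm m n, Function.iterate_mul]
    exact hd
  · have := hOball hzS
    rw [Metric.mem_closedBall] at this
    rw [dist_comm]
    linarith


/-- For a homeomorphism of a compact metric space with the shadowing
property, the closure of the recurrent set equals the chain recurrent set. -/
theorem closure_recurrent_eq_chainRecurrent {X : Type*} [MetricSpace X] [CompactSpace X]
    (f : X ≃ₜ X) (hsh : ShadowingProperty f) :
    closure {x : X | IsRecurrentPt (⇑f) x} = {x : X | IsChainRecurrentPt (⇑f) x} := by
  apply Set.Subset.antisymm
  · exact closure_minimal (fun x hx => recurrent_imp_chainRecurrent (⇑f) x hx)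
      (isClosed_chainRecurrent (⇑f) f.continuous)
  · exact fun x hx => chainRecurrent_mem_closure f hsh x hx
end

section
/- Let f be a transitive non-invertible local homeomorphism of the circle S¹. Then f is topologically conjugate to a linear expanding map E_d: x ↦ dx (mod 1) with |d| ≥ 2. -/
open Set Function Filter

noncomputable section

namespace S8

local instance fact01 : Fact ((0:ℝ) < 1) := ⟨one_pos⟩

abbrev 𝕊 := AddCircle (1 : ℝ)

/-- quotient map as an `AddMonoidHom` -/
def pi1 : ℝ →+ 𝕊 := QuotientAddGroup.mk' (AddSubgroup.zmultiples (1:ℝ))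

lemma pi1_apply (x : ℝ) : pi1 x = (x : 𝕊) := rfl

lemma coe_int (n : ℤ) : ((n : ℝ) : 𝕊) = 0 := by
  rw [AddCircle.coe_eq_zero_iff]
  exact ⟨n, by simp⟩

lemma coe_eq_coe {u v : ℝ} : (u : 𝕊) = (v : 𝕊) ↔ ∃ n : ℤ, u - v = n := by
  rw [QuotientAddGroup.eq_iff_sub_mem]
  constructor
  · rintro h
    rcases AddSubgroup.mem_zmultiples_iff.mp h with ⟨n, hn⟩
    exact ⟨n, by simpa using hn.symm⟩
  · rintro ⟨n, hn⟩
    exact AddSubgroup.mem_zmultiples_iff.mpr ⟨n, by simpa using hn.symm⟩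

lemma coe_add (u v : ℝ) : ((u + v : ℝ) : 𝕊) = (u : 𝕊) + (v : 𝕊) := map_add pi1 u v

/-- the canonical representative in `(-1/2, 1/2]` -/
def rep (z : 𝕊) : ℝ := ((AddCircle.equivIoc 1 (-(1/2)) z : Ioc (-(1/2):ℝ) (-(1/2)+1)) : ℝ)

lemma rep_mem (z : 𝕊) : rep z ∈ Ioc (-(1/2):ℝ) (1/2) := by
  have := (AddCircle.equivIoc 1 (-(1/2)) z).2
  norm_num at this ⊢
  exact this

lemma abs_rep_le (z : 𝕊) : |rep z| ≤ 1/2 := by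
  have := rep_mem z
  rw [abs_le]
  exact ⟨by linarith [this.1], this.2⟩

lemma coe_rep (z : 𝕊) : (rep z : 𝕊) = z :=
  (AddCircle.equivIoc 1 (-(1/2))).symm_apply_apply z

lemma rep_coe_of_mem {x : ℝ} (hx : x ∈ Ioc (-(1/2):ℝ) (1/2)) : rep ((x : 𝕊)) = x := by
  have hx' : x ∈ Ioc (-(1/2):ℝ) (-(1/2)+1) := by norm_num at hx ⊢; exact hx
  show ((AddCircle.equivIoc 1 (-(1/2)) (x : 𝕊) : Ioc (-(1/2):ℝ) (-(1/2)+1)) : ℝ) = x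
  rw [show (AddCircle.equivIoc 1 (-(1/2)) (x : 𝕊)) = ⟨x, hx'⟩ from ?_]
  rw [Equiv.apply_eq_iff_eq_symm_apply]
  rfl

lemma norm_coe (x : ℝ) : ‖(x : 𝕊)‖ = |x - round x| := by
  have := AddCircle.norm_eq (p := (1:ℝ)) (x := x)
  simpa using this

lemma abs_rep_eq_norm {z : 𝕊} (h : ‖z‖ < 1/2) : |rep z| = ‖z‖ := by
  obtain ⟨x, rfl⟩ : ∃ x : ℝ, (x : 𝕊) = z := QuotientAddGroup.mk_surjective z
  set r := x - round x with hr
  have hnorm : ‖(x : 𝕊)‖ = |r| := norm_coe x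
  have hrlt : |r| < 1/2 := by rw [← hnorm]; exact h
  have hco : (r : 𝕊) = (x : 𝕊) := coe_eq_coe.mpr ⟨-round x, by push_cast; ring⟩
  have hmem : r ∈ Ioc (-(1/2):ℝ) (1/2) := by
    rw [abs_lt] at hrlt
    exact ⟨hrlt.1, le_of_lt hrlt.2⟩
  calc |rep ((x:𝕊))| = |rep ((r:𝕊))| := by rw [hco]
    _ = |r| := by rw [rep_coe_of_mem hmem]
    _ = ‖(x:𝕊)‖ := hnorm.symm

lemma int_eq_zero_of_abs_lt {n : ℤ} (h : |(n : ℝ)| < 1) : n = 0 := by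
  by_contra hn
  have : (1:ℝ) ≤ |(n:ℝ)| := by
    rw [← Int.cast_abs]
    exact_mod_cast Int.one_le_abs (by omega)
  linarith

lemma rep_add {a b : 𝕊} (ha : ‖a‖ < 1/4) (hb : ‖b‖ < 1/4) :
    rep (a + b) = rep a + rep b := by
  have ha' : |rep a| < 1/4 := by rw [abs_rep_eq_norm (by linarith)]; exact ha
  have hb' : |rep b| < 1/4 := by rw [abs_rep_eq_norm (by linarith)]; exact hb
  have hco : ((rep a + rep b : ℝ) : 𝕊) = a + b := by
    rw [coe_add, coe_rep, coe_rep]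
  have : ((rep (a+b) : ℝ) : 𝕊) = ((rep a + rep b : ℝ) : 𝕊) := by rw [coe_rep, hco]
  obtain ⟨n, hn⟩ := coe_eq_coe.mp this
  have habs : |(n:ℝ)| < 1 := by
    rw [← hn]
    have h1 := abs_rep_le (a+b)
    have h2 : |rep a + rep b| ≤ |rep a| + |rep b| := abs_add_le _ _
    calc |rep (a+b) - (rep a + rep b)| ≤ _ := abs_sub _ _
      _ < 1 := by linarith
  have hn0 := int_eq_zero_of_abs_lt habs
  subst hn0
  push_cast at hn
  linarith [hn]

lemma continuousAt_rep {z : 𝕊} (h : ‖z‖ < 1/2) : ContinuousAt rep z := by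
  have hz : z ≠ ((-(1/2) : ℝ) : 𝕊) := by
    intro hzz
    rw [hzz, norm_coe] at h
    norm_num [round_eq] at h
  exact continuousAt_subtype_val.comp (AddCircle.continuousAt_equivIoc 1 (-(1/2)) hz)

lemma sum_pair (n : ℕ) (t : ℕ → ℝ) :
    ∑ i ∈ Finset.range (2*n), t i = ∑ k ∈ Finset.range n, (t (2*k) + t (2*k+1)) := by
  induction n with
  | zero => simp
  | succ n ih =>
      rw [Finset.sum_range_succ, ← ih, show 2*(n+1) = (2*n+1)+1 by ring,
        Finset.sum_range_succ, Finset.sum_range_succ]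
      ring_nf

lemma contAt_sum {n : ℕ} {F : ℕ → ℝ → ℝ} {x : ℝ} (h : ∀ k < n, ContinuousAt (F k) x) :
    ContinuousAt (fun y => ∑ k ∈ Finset.range n, F k y) x := by
  induction n with
  | zero => simpa using continuousAt_const
  | succ n ih =>
      simp only [Finset.sum_range_succ]
      exact (ih fun k hk => h k (by omega)).add (h n (by omega))

section Lift

variable (g : ℝ → 𝕊) (δ : ℝ)

def pts (m k : ℕ) (x : ℝ) : ℝ := (k : ℝ) * x / 2^m

def stp (m k : ℕ) (x : ℝ) : 𝕊 := g (pts m (k+1) x) - g (pts m k x)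

def T (m : ℕ) (x : ℝ) : ℝ := ∑ k ∈ Finset.range (2^m), rep (stp g m k x)

variable {g δ}

lemma stp_norm_lt (hsmall : ∀ u v : ℝ, |u - v| < δ → ‖g u - g v‖ < 1/8)
    {m : ℕ} {x : ℝ} (hx : |x| < 2^m * δ) (k : ℕ) : ‖stp g m k x‖ < 1/8 := by
  apply hsmall
  have : pts m (k+1) x - pts m k x = x / 2^m := by
    unfold pts; push_cast; field_simp; ring
  rw [this, abs_div, abs_of_pos (show (0:ℝ) < 2^m by positivity)]
  rw [div_lt_iff₀ (show (0:ℝ) < 2^m by positivity)]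
  linarith [hx, mul_comm (2^m : ℝ) δ]

lemma T_succ (hδ : 0 < δ) (hsmall : ∀ u v : ℝ, |u - v| < δ → ‖g u - g v‖ < 1/8)
    {m : ℕ} {x : ℝ} (hx : |x| < 2^m * δ) : T g (m+1) x = T g m x := by
  have hx' : |x| < 2^(m+1) * δ := by
    have : (2:ℝ)^m * δ ≤ 2^(m+1) * δ := by
      apply mul_le_mul_of_nonneg_right _ hδ.le
      exact pow_le_pow_right₀ (by norm_num) (by omega)
    linarith
  have h8 : ∀ k, ‖stp g (m+1) k x‖ < 1/8 := stp_norm_lt hsmall hx'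
  unfold T
  rw [show 2^(m+1) = 2 * 2^m by ring, sum_pair]
  apply Finset.sum_congr rfl
  intro k _
  have hpts0 : pts (m+1) (2*k) x = pts m k x := by unfold pts; push_cast; field_simp; ring
  have hpts2 : pts (m+1) (2*k+1+1) x = pts m (k+1) x := by unfold pts; push_cast; field_simp; ring
  have hsum : stp g (m+1) (2*k+1) x + stp g (m+1) (2*k) x = stp g m k x := by
    unfold stp
    rw [hpts0, hpts2, sub_add_sub_cancel]
  rw [← hsum, rep_add (by linarith [h8 (2*k+1)]) (by linarith [h8 (2*k)])]
  ring

lemma T_bridge (hδ : 0 < δ) (hsmall : ∀ u v : ℝ, |u - v| < δ → ‖g u - g v‖ < 1/8)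
    {m : ℕ} {x : ℝ} (hx : |x| < 2^m * δ) (j : ℕ) : T g (m+j) x = T g m x := by
  induction j with
  | zero => rfl
  | succ j ih =>
      have hxj : |x| < 2^(m+j) * δ := by
        have : (2:ℝ)^m * δ ≤ 2^(m+j) * δ := by
          apply mul_le_mul_of_nonneg_right _ hδ.le
          exact pow_le_pow_right₀ (by norm_num) (by omega)
        linarith
      rw [show m + (j+1) = (m+j)+1 by omega, T_succ hδ hsmall hxj, ih]

lemma T_eq (hδ : 0 < δ) (hsmall : ∀ u v : ℝ, |u - v| < δ → ‖g u - g v‖ < 1/8)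
    {m m' : ℕ} {x : ℝ} (hx : |x| < 2^m * δ) (hx' : |x| < 2^m' * δ) :
    T g m x = T g m' x := by
  rcases le_total m m' with h | h
  · rw [← T_bridge hδ hsmall hx (m' - m), show m + (m' - m) = m' by omega]
  · rw [← T_bridge hδ hsmall hx' (m - m'), show m' + (m - m') = m by omega]

lemma exists_pow_bound (hδ : 0 < δ) (x : ℝ) : ∃ m : ℕ, |x| < 2^m * δ := by
  obtain ⟨m, hm⟩ := pow_unbounded_of_one_lt (|x| / δ) (show (1:ℝ) < 2 by norm_num)
  exact ⟨m, by rwa [div_lt_iff₀ hδ] at hm⟩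

def Flift (hδ : 0 < δ) (x : ℝ) : ℝ :=
  T g (Nat.find (exists_pow_bound hδ x)) x + rep (g 0)

lemma Flift_eq (hδ : 0 < δ) (hsmall : ∀ u v : ℝ, |u - v| < δ → ‖g u - g v‖ < 1/8)
    {m : ℕ} {x : ℝ} (hx : |x| < 2^m * δ) :
    Flift (g := g) hδ x = T g m x + rep (g 0) := by
  unfold Flift
  rw [T_eq hδ hsmall (Nat.find_spec (exists_pow_bound hδ x)) hx]

lemma coe_T (m : ℕ) (x : ℝ) : ((T g m x : ℝ) : 𝕊) = g x - g 0 := by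
  have : pi1 (T g m x) = ∑ k ∈ Finset.range (2^m), pi1 (rep (stp g m k x)) := by
    unfold T; exact map_sum pi1 _ _
  rw [← pi1_apply, this]
  have h2 : ∀ k ∈ Finset.range (2^m), pi1 (rep (stp g m k x)) =
      g (pts m (k+1) x) - g (pts m k x) := by
    intro k _
    rw [pi1_apply, coe_rep]; rfl
  rw [Finset.sum_congr rfl h2, Finset.sum_range_sub (fun k => g (pts m k x))]
  have hlast : pts m (2^m) x = x := by unfold pts; push_cast; field_simp
  have h0 : pts m 0 x = 0 := by unfold pts; push_cast; simp
  rw [hlast, h0]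

lemma Flift_coe (hδ : 0 < δ) (x : ℝ) : ((Flift (g := g) hδ x : ℝ) : 𝕊) = g x := by
  unfold Flift
  rw [coe_add, coe_T, coe_rep]
  abel

lemma Flift_continuous (hδ : 0 < δ)
    (hsmall : ∀ u v : ℝ, |u - v| < δ → ‖g u - g v‖ < 1/8) (hg : Continuous g) :
    Continuous (Flift (g := g) hδ) := by
  rw [continuous_iff_continuousAt]
  intro x₀
  obtain ⟨m, hm⟩ := exists_pow_bound hδ (|x₀| + 1)
  have hm' : |x₀| + 1 < 2^m * δ := by
    rwa [abs_of_pos (by positivity)] at hm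
  have hx₀ : |x₀| < 2^m * δ := by linarith
  have hcont : ContinuousAt (fun x => T g m x + rep (g 0)) x₀ := by
    apply ContinuousAt.add _ continuousAt_const
    apply contAt_sum
    intro k _
    have hnorm : ‖stp g m k x₀‖ < 1/2 := by
      linarith [stp_norm_lt hsmall hx₀ k]
    apply (continuousAt_rep hnorm).comp
    apply ContinuousAt.sub
    · exact (hg.comp ((continuous_const.mul continuous_id).div_const _)).continuousAt
    · exact (hg.comp ((continuous_const.mul continuous_id).div_const _)).continuousAt
  apply hcont.congr
  have hball : Metric.ball x₀ 1 ∈ nhds x₀ := Metric.ball_mem_nhds x₀ one_pos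
  apply Filter.eventuallyEq_of_mem hball
  intro x hx
  rw [Metric.mem_ball, Real.dist_eq] at hx
  have : |x| < 2^m * δ := by
    calc |x| ≤ |x₀| + |x - x₀| := by
          have := abs_sub_abs_le_abs_sub x x₀; linarith [abs_nonneg (x - x₀)]
      _ < 2^m * δ := by linarith
  rw [Flift_eq hδ hsmall this]

lemma exists_lift (f : 𝕊 → 𝕊) (hf : Continuous f) :
    ∃ F : ℝ → ℝ, Continuous F ∧ ∀ x : ℝ, ((F x : ℝ) : 𝕊) = f ((x : ℝ) : 𝕊) := by
  set g : ℝ → 𝕊 := fun x : ℝ => f ((x : ℝ) : 𝕊) with hgdef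
  have hπc : Continuous (fun x : ℝ => ((x : ℝ) : 𝕊)) := continuous_quotient_mk'
  have hg : Continuous g := hf.comp hπc
  have hπu : UniformContinuous (fun x : ℝ => ((x : ℝ) : 𝕊)) := by
    apply LipschitzWith.uniformContinuous (K := 1)
    apply LipschitzWith.of_dist_le_mul
    intro x y
    simp only [NNReal.coe_one, one_mul, dist_eq_norm]
    have : (x : 𝕊) - (y : 𝕊) = ((x - y : ℝ) : 𝕊) := (map_sub pi1 x y).symm
    rw [this, Real.norm_eq_abs]
    have := QuotientAddGroup.norm_mk_le_norm (S := AddSubgroup.zmultiples (1:ℝ)) (m := x - y)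
    simpa using this
  have hug : UniformContinuous g := (CompactSpace.uniformContinuous_of_continuous hf).comp hπu
  obtain ⟨δ, hδ, hd⟩ := Metric.uniformContinuous_iff.mp hug (1/8) (by norm_num)
  have hsmall : ∀ u v : ℝ, |u - v| < δ → ‖g u - g v‖ < 1/8 := by
    intro u v huv
    have := hd (a := u) (b := v) (by rwa [Real.dist_eq])
    rwa [dist_eq_norm] at this
  exact ⟨Flift (g := g) hδ, Flift_continuous hδ hsmall hg, fun x => Flift_coe hδ x⟩

end Lift

/-! ### auxiliary real-analysis lemmas -/

lemma exists_deg {F : ℝ → ℝ} (hF : Continuous F)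
    (h : ∀ x : ℝ, ((F (x+1) - F x : ℝ) : 𝕊) = 0) :
    ∃ d : ℤ, ∀ x, F (x+1) = F x + d := by
  have hint : ∀ x : ℝ, ∃ n : ℤ, F (x+1) - F x = n := by
    intro x
    rcases (AddCircle.coe_eq_zero_iff _).mp (h x) with ⟨n, hn⟩
    exact ⟨n, by simpa using hn.symm⟩
  obtain ⟨d, hd⟩ := hint 0
  refine ⟨d, fun x => ?_⟩
  by_contra hx
  obtain ⟨n, hn⟩ := hint x
  have hnd : n ≠ d := by
    rintro rfl
    apply hx
    linarith [hn]
  set φ := fun y : ℝ => F (y+1) - F y with hφ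
  have hφc : Continuous φ := (hF.comp (continuous_id.add continuous_const)).sub hF
  have hφint : ∀ y : ℝ, ∃ m : ℤ, φ y = m := hint
  have key : ∀ v : ℝ, v ∈ uIcc (φ 0) (φ x) → ∃ y, φ y = v := by
    intro v hv
    obtain ⟨y, _, hy⟩ := intermediate_value_uIcc (hφc.continuousOn) hv
    exact ⟨y, hy⟩
  have hmem : ((min n d : ℤ) : ℝ) + 1/2 ∈ uIcc (φ 0) (φ x) := by
    have h0 : φ 0 = (d:ℝ) := hd
    have h1 : φ x = (n:ℝ) := hn
    rw [mem_uIcc, h0, h1]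
    rcases lt_or_gt_of_ne hnd with hlt | hlt
    · right
      have hmin : min n d = n := min_eq_left hlt.le
      rw [hmin]
      have : (n:ℝ) + 1 ≤ d := by exact_mod_cast hlt
      constructor <;> linarith
    · left
      have hmin : min n d = d := min_eq_right hlt.le
      rw [hmin]
      have : (d:ℝ) + 1 ≤ n := by exact_mod_cast hlt
      constructor <;> linarith
  obtain ⟨y, hy⟩ := key _ hmem
  obtain ⟨m, hm⟩ := hφint y
  rw [hm] at hy
  have : (2*m : ℝ) = 2 * (min n d : ℤ) + 1 := by linarith
  have h2 : (2*m : ℤ) = 2 * min n d + 1 := by exact_mod_cast this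
  omega

lemma no_interior_max {G : ℝ → ℝ} (hGo : IsOpenMap G) {a b c : ℝ} (hc : c ∈ Ioo a b)
    (h : ∀ y ∈ Icc a b, G y ≤ G c) : False := by
  have hopen : IsOpen (G '' Ioo a b) := hGo _ isOpen_Ioo
  have hmem : G c ∈ G '' Ioo a b := ⟨c, hc, rfl⟩
  rcases Metric.isOpen_iff.mp hopen _ hmem with ⟨ε, hε, hball⟩
  have hb2 : G c + ε/2 ∈ Metric.ball (G c) ε := by
    rw [Metric.mem_ball, Real.dist_eq]
    rw [show G c + ε/2 - G c = ε/2 by ring, abs_of_pos (by linarith)]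
    linarith
  rcases hball hb2 with ⟨y, hy, hyG⟩
  have := h y (Ioo_subset_Icc_self hy)
  rw [hyG] at this
  linarith

lemma injective_of_isOpenMap {F : ℝ → ℝ} (hF : Continuous F) (hO : IsOpenMap F) :
    Injective F := by
  have key : ∀ a b : ℝ, a < b → F a = F b → False := by
    intro a b hab hFab
    have hne : (Icc a b).Nonempty := ⟨a, by constructor <;> [exact le_refl a; exact hab.le]⟩
    obtain ⟨c, hc, hcmax⟩ := isCompact_Icc.exists_isMaxOn hne hF.continuousOn
    obtain ⟨c', hc', hcmin⟩ := isCompact_Icc.exists_isMinOn hne hF.continuousOn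
    have hmax_end : F c = F a := by
      rcases eq_or_lt_of_le hc.1 with h1 | h1
      · rw [← h1]
      rcases eq_or_lt_of_le hc.2 with h2 | h2
      · rw [h2, ← hFab]
      exact (no_interior_max hO ⟨h1, h2⟩ fun y hy => hcmax hy).elim
    have hmin_end : F c' = F a := by
      have hO' : IsOpenMap (fun x => -(F x)) := (Homeomorph.neg ℝ).isOpenMap.comp hO
      rcases eq_or_lt_of_le hc'.1 with h1 | h1
      · rw [← h1]
      rcases eq_or_lt_of_le hc'.2 with h2 | h2
      · rw [h2, ← hFab]
      refine (no_interior_max hO' ⟨h1, h2⟩ fun y hy => ?_).elim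
      exact neg_le_neg (hcmin hy)
    have hconst : ∀ y ∈ Icc a b, F y = F a := by
      intro y hy
      have hle : F y ≤ F a := le_trans (hcmax hy) hmax_end.le
      have hge : F a ≤ F y := le_trans hmin_end.ge (hcmin hy)
      linarith
    apply no_interior_max hO (show (a+b)/2 ∈ Ioo a b from ⟨by linarith, by linarith⟩)
    intro y hy
    rw [hconst y hy, hconst ((a+b)/2) ⟨by linarith [hab], by linarith [hab]⟩]
  intro a b hab
  by_contra hne
  rcases lt_or_gt_of_ne hne with h | h
  · exact key a b h hab
  · exact key b a h hab.symm

lemma int_translate {u : ℝ → ℝ} {c : ℝ} (h : ∀ x, u (x+1) = u x + c) :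
    ∀ (n : ℤ) (x : ℝ), u (x + n) = u x + n * c := by
  intro n
  induction n using Int.induction_on with
  | zero => simp
  | succ k ih =>
      intro x
      have h1 : x + ((k:ℤ)+1 : ℤ) = (x + (k:ℤ)) + 1 := by push_cast; ring
      rw [h1, h, ih]
      push_cast
      ring
  | pred k ih =>
      intro x
      have h1 : x + ((-(k:ℤ)-1 : ℤ)) = (x + (-(k:ℤ))) - 1 := by push_cast; ring
      rw [h1]
      have h2 := h ((x + (-(k:ℤ))) - 1)
      rw [sub_add_cancel] at h2
      have h3 := ih x
      push_cast at *
      linarith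

lemma periodic_bound {u : ℝ → ℝ} (hu : Continuous u) (hper : ∀ x, u (x+1) = u x) :
    ∃ C : ℝ, 0 ≤ C ∧ ∀ x, |u x| ≤ C := by
  obtain ⟨C, hC⟩ :=
    (isCompact_Icc (a := (0:ℝ)) (b := 1)).exists_bound_of_continuousOn hu.continuousOn
  refine ⟨C, le_trans (norm_nonneg (u 0)) (hC 0 (by norm_num)), fun x => ?_⟩
  have htrans := int_translate (u := u) (c := 0) (fun x => by rw [hper x, add_zero])
  have hxsplit : Int.fract x + (⌊x⌋:ℤ) = x := by
    push_cast
    linarith [Int.floor_add_fract x]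
  have heq : u x = u (Int.fract x) := by
    calc u x = u (Int.fract x + (⌊x⌋:ℤ)) := by rw [hxsplit]
      _ = u (Int.fract x) := by rw [htrans ⌊x⌋ (Int.fract x), mul_zero, add_zero]
  rw [heq]
  exact hC _ ⟨Int.fract_nonneg x, (Int.fract_lt_one x).le⟩

instance : Infinite 𝕊 := by
  apply Infinite.of_injective (fun n : ℕ => ((1/(n+2) : ℝ) : 𝕊))
  intro a b hab
  have hmem : ∀ n : ℕ, (1/((n:ℝ)+2)) ∈ Ioc (-(1/2):ℝ) (1/2) := by
    intro n
    constructor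
    · have : (0:ℝ) < 1/((n:ℝ)+2) := by positivity
      linarith
    · rw [div_le_div_iff₀ (by positivity) (by norm_num)]
      have : (0:ℝ) ≤ n := Nat.cast_nonneg n
      linarith
  have := congrArg rep hab
  rw [rep_coe_of_mem (hmem a), rep_coe_of_mem (hmem b)] at this
  field_simp at this
  exact_mod_cast (by linarith : (a:ℝ) = b)

lemma surj_of_lin {F : ℝ → ℝ} (hFc : Continuous F) {c C : ℝ} (hc : c = 1 ∨ c = -1)
    (hbound : ∀ x, |F x - c * x| ≤ C) : Surjective F := by
  rcases hc with rfl | rfl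
  · apply Continuous.surjective hFc
    · apply tendsto_atTop_mono (fun x => ?_)
        (tendsto_atTop_add_const_right atTop (-C) tendsto_id)
      have := hbound x; rw [abs_le] at this
      simp only [one_mul] at this
      simp only [id_eq]
      linarith [this.2]
    · apply tendsto_atBot_mono (fun x => ?_)
        (tendsto_atBot_add_const_right atBot C tendsto_id)
      have := hbound x; rw [abs_le] at this
      simp only [one_mul] at this
      simp only [id_eq]
      linarith [this.1]
  · apply Continuous.surjective' hFc
    · apply tendsto_atTop_mono (fun x => ?_)
        (tendsto_atTop_add_const_right atBot (-C) tendsto_neg_atBot_atTop)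
      have := hbound x; rw [abs_le] at this
      have h2 : F x - (-1) * x = F x + x := by ring
      rw [h2] at this
      linarith [this.2]
    · apply tendsto_atBot_mono (fun x => ?_)
        (tendsto_atBot_add_const_right atTop C tendsto_neg_atTop_atBot)
      have := hbound x; rw [abs_le] at this
      have h2 : F x - (-1) * x = F x + x := by ring
      rw [h2] at this
      linarith [this.1]

end S8

open S8 in
/-- A transitive non-invertible local homeomorphism of the circle is
topologically conjugate to a linear expanding map `E_d : x ↦ d·x (mod 1)` with `|d| ≥ 2`. -/
theorem transitive_local_homeo_conjugate_to_expanding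
    (f : AddCircle (1 : ℝ) → AddCircle (1 : ℝ))
    (hlocal : IsLocalHomeomorph f)
    (hninv : ¬ Function.Bijective f)
    (htrans : ∃ x₀, Dense (Set.range fun n : ℕ => f^[n] x₀)) :
    ∃ d : ℤ, 2 ≤ |d| ∧ ∃ h : AddCircle (1 : ℝ) ≃ₜ AddCircle (1 : ℝ),
      ∀ x, h (f x) = d • h x := by
  haveI : Fact ((0:ℝ) < 1) := ⟨one_pos⟩
  obtain ⟨x₀, hx₀⟩ := htrans
  have hfc : Continuous f := hlocal.continuous
  obtain ⟨F, hFc, hFcoe⟩ := exists_lift f hfc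
  have hcoe1 : ∀ x : ℝ, ((x + 1 : ℝ) : 𝕊) = ((x : ℝ) : 𝕊) := by
    intro x
    rw [coe_add, show ((1:ℝ) : 𝕊) = 0 from by simpa using coe_int 1, add_zero]
  have hdeg0 : ∀ x : ℝ, ((F (x+1) - F x : ℝ) : 𝕊) = 0 := by
    intro x
    have hsub : ((F (x+1) - F x : ℝ) : 𝕊) = ((F (x+1) :ℝ):𝕊) - ((F x:ℝ):𝕊) :=
      map_sub pi1 _ _
    rw [hsub, hFcoe, hFcoe, hcoe1, sub_self]
  obtain ⟨d, hd⟩ := exists_deg hFc hdeg0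
  have hcoeLH : IsLocalHomeomorph (fun x : ℝ => ((x : ℝ) : 𝕊)) :=
    AddCircle.isLocalHomeomorph_coe 1
  have hFlh : IsLocalHomeomorph F := by
    apply IsLocalHomeomorph.of_comp (g := fun x : ℝ => ((x : ℝ) : 𝕊)) ?_ hcoeLH hFc
    have hco : ((fun x : ℝ => ((x:ℝ):𝕊)) ∘ F) = f ∘ (fun x : ℝ => ((x:ℝ):𝕊)) :=
      funext hFcoe
    rw [hco]
    exact hlocal.comp hcoeLH
  have hFinj : Function.Injective F := injective_of_isOpenMap hFc hFlh.isOpenMap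
  have hmono := hFc.strictMono_of_inj hFinj
  have hFtr : ∀ (n : ℤ) (x : ℝ), F (x + n) = F x + n * d := by
    intro n x
    have := int_translate (c := (d:ℝ)) hd n x
    simpa using this
  have hd0 : d ≠ 0 := by
    rintro rfl
    have h1 : F (0 + 1) = F 0 := by simpa using hd 0
    have := hFinj h1
    norm_num at this
  have hsign : (0 < (d:ℝ) ∧ StrictMono F) ∨ ((d:ℝ) < 0 ∧ StrictAnti F) := by
    rcases hmono with hsm | hsa
    · left
      refine ⟨?_, hsm⟩
      have h1 := hsm (show (0:ℝ) < 0 + 1 by norm_num)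
      rw [hd 0] at h1
      linarith
    · right
      refine ⟨?_, hsa⟩
      have h1 := hsa (show (0:ℝ) < 0 + 1 by norm_num)
      rw [hd 0] at h1
      linarith
  have hnot1 : ¬ (d = 1 ∨ d = -1) := by
    intro hcase
    apply hninv
    have hdd : (d:ℝ) * d = 1 := by rcases hcase with rfl | rfl <;> norm_num
    have hperF : ∀ x, (fun y => F y - (d:ℝ) * y) (x+1) = (fun y => F y - (d:ℝ)*y) x := by
      intro x; simp only; rw [hd x]; push_cast; ring
    obtain ⟨C, hC0, hC⟩ := periodic_bound
      (hFc.sub (continuous_const.mul continuous_id)) hperF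
    have hFsurj : Function.Surjective F := by
      apply surj_of_lin hFc (c := (d:ℝ)) ?_ hC
      rcases hcase with rfl | rfl
      · left; norm_num
      · right; norm_num
    constructor
    · intro z w hzw
      obtain ⟨a, rfl⟩ := QuotientAddGroup.mk_surjective z
      obtain ⟨b, rfl⟩ := QuotientAddGroup.mk_surjective w
      rw [← hFcoe a, ← hFcoe b] at hzw
      obtain ⟨n, hn⟩ := coe_eq_coe.mp hzw
      have heq : F a = F (b + ((n*d : ℤ):ℝ)) := by
        rw [hFtr (n*d) b]
        push_cast
        have : (n:ℝ) * d * d = n * ((d:ℝ) * d) := by ring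
        rw [this, hdd]
        linarith
      have hab := hFinj heq
      apply coe_eq_coe.mpr ⟨n*d, by rw [hab]; push_cast; ring⟩
    · intro z
      obtain ⟨y, rfl⟩ := QuotientAddGroup.mk_surjective z
      obtain ⟨x, hx⟩ := hFsurj y
      exact ⟨((x:ℝ):𝕊), by rw [← hFcoe x, hx]⟩
  have habs2 : 2 ≤ |d| := by
    have h1 : d ≠ 1 := fun h => hnot1 (Or.inl h)
    have h2 : d ≠ -1 := fun h => hnot1 (Or.inr h)
    rw [Int.abs_eq_natAbs]
    omega
  -- the linear model data
  set dR : ℝ := (d:ℝ) with hdR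
  have hdRne : dR ≠ 0 := Int.cast_ne_zero.mpr hd0
  have hdR2 : (2:ℝ) ≤ |dR| := by
    rw [hdR, ← Int.cast_abs]
    exact_mod_cast habs2
  set u : ℝ → ℝ := fun x => F x - dR * x with hu
  have huc : Continuous u := hFc.sub (continuous_const.mul continuous_id)
  have huper : ∀ x, u (x+1) = u x := by
    intro x; simp only [hu]; rw [hd x]; push_cast; ring
  obtain ⟨C, hC0, hC⟩ := periodic_bound huc huper
  have huint : ∀ (n:ℤ) (x:ℝ), u (x + n) = u x := by
    have h0 := int_translate (u := u) (c := 0) (fun x => by rw [huper, add_zero])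
    intro n x
    simpa using h0 n x
  have hFiter : ∀ (n : ℕ) (x : ℝ), F^[n] (x + 1) = F^[n] x + dR^n := by
    intro n
    induction n with
    | zero => simp
    | succ n ih =>
        intro x
        rw [Function.iterate_succ_apply', Function.iterate_succ_apply', ih]
        have hcast : F^[n] x + dR^n = F^[n] x + ((d^n : ℤ) : ℝ) := by push_cast; ring
        rw [hcast, hFtr (d^n) (F^[n] x)]
        push_cast; ring
  set e : ℕ → ℝ → ℝ := fun n x => u (F^[n] x) / dR^(n+1) with he
  have hiterc : ∀ n : ℕ, Continuous (fun x => F^[n] x) := by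
    intro n
    induction n with
    | zero => simpa using continuous_id'
    | succ n ih =>
        have : (fun x => F^[n+1] x) = F ∘ (fun x => F^[n] x) := by
          funext x; rw [Function.iterate_succ_apply', Function.comp_apply]
        rw [this]
        exact hFc.comp ih
  have hec : ∀ n, Continuous (e n) := fun n => ((huc.comp (hiterc n)).div_const _)
  set bnd : ℕ → ℝ := fun n => (C/2) * (1/2)^n with hbnd
  have hbound : ∀ (n : ℕ) (x : ℝ), |e n x| ≤ bnd n := by
    intro n x
    have h1 : (2:ℝ)^(n+1) ≤ |dR|^(n+1) := pow_le_pow_left₀ (by norm_num) hdR2 _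
    have h2 : |e n x| = |u (F^[n] x)| / |dR|^(n+1) := by
      rw [he]; simp [abs_div, abs_pow]
    rw [h2]
    have h3 : |u (F^[n] x)| ≤ C := hC _
    calc |u (F^[n] x)| / |dR|^(n+1) ≤ C / 2^(n+1) :=
          div_le_div₀ hC0 h3 (by positivity) h1
      _ = bnd n := by
          rw [hbnd]
          simp only [div_pow, one_pow, pow_succ]
          ring
  have hbsum : Summable bnd :=
    (summable_geometric_of_lt_one (by norm_num) (by norm_num)).mul_left _
  have hesum : ∀ x, Summable (fun n => e n x) := fun x =>
    Summable.of_norm_bounded hbsum (fun n => by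
      rw [Real.norm_eq_abs]; exact hbound n x)
  set H : ℝ → ℝ := fun x => x + ∑' n, e n x with hH
  have hHc : Continuous H :=
    continuous_id.add (continuous_tsum hec hbsum (fun n x => by
      rw [Real.norm_eq_abs]; exact hbound n x))
  have hHF : ∀ x, H (F x) = dR * H x := by
    intro x
    have h2 : ∀ n, dR * e n x = u (F^[n] x) / dR^n := by
      intro n
      rw [he]
      simp only
      rw [pow_succ]
      field_simp
    have h3 : Summable (fun n => u (F^[n] x) / dR^n) := by
      have hs := (hesum x).mul_left dR
      have : (fun n => dR * e n x) = fun n => u (F^[n] x) / dR^n := funext h2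
      rwa [this] at hs
    have h1 : dR * H x = dR * x + ∑' n, u (F^[n] x) / dR^n := by
      rw [hH]
      simp only
      rw [mul_add, ← tsum_mul_left, tsum_congr h2]
    rw [h1, Summable.tsum_eq_zero_add h3]
    have h4 : ∀ n : ℕ, u (F^[n+1] x) / dR^(n+1) = e n (F x) := by
      intro n
      rw [he]
      simp only
      rw [Function.iterate_succ_apply]
    rw [tsum_congr h4]
    rw [hH]
    simp only [pow_zero, div_one, Function.iterate_zero, id_eq]
    have : u x = F x - dR * x := rfl
    rw [this]
    ring
  have hHper : ∀ x, H (x+1) = H x + 1 := by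
    intro x
    have hee : ∀ n : ℕ, e n (x+1) = e n x := by
      intro n
      rw [he]
      simp only
      rw [hFiter n x]
      have hcast : F^[n] x + dR^n = F^[n] x + ((d^n : ℤ) : ℝ) := by push_cast; ring
      rw [hcast, huint (d^n) (F^[n] x)]
    rw [hH]
    simp only
    rw [tsum_congr hee]
    ring
  have hHint : ∀ (n:ℤ) (x : ℝ), H (x + n) = H x + n := by
    intro n x
    have := int_translate (u := H) (c := 1) (fun y => by rw [hHper y]) n x
    simpa using this
  have hpows : ∀ n : ℕ, (StrictMono (F^[n]) ∧ 0 < dR^n) ∨ (StrictAnti (F^[n]) ∧ dR^n < 0) := by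
    intro n
    induction n with
    | zero =>
        left
        constructor
        · rw [Function.iterate_zero]; exact strictMono_id
        · norm_num
    | succ n ih =>
        rw [Function.iterate_succ', pow_succ]
        rcases hsign with ⟨hdpos, hsm⟩ | ⟨hdneg, hsa⟩ <;> rcases ih with ⟨hm, hp⟩ | ⟨hm, hp⟩
        · exact Or.inl ⟨hsm.comp hm, mul_pos hp hdpos⟩
        · exact Or.inr ⟨hsm.comp_strictAnti hm, mul_neg_of_neg_of_pos hp hdpos⟩
        · exact Or.inr ⟨hsa.comp_strictMono hm, mul_neg_of_pos_of_neg hp hdneg⟩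
        · exact Or.inl ⟨hsa.comp hm, mul_pos_of_neg_of_neg hp hdneg⟩
  have hGmono : ∀ N : ℕ, Monotone (fun x => F^[N] x / dR^N) := by
    intro N x y hxy
    simp only [div_eq_mul_inv]
    rcases hpows N with ⟨hm, hp⟩ | ⟨hm, hp⟩
    · exact mul_le_mul_of_nonneg_right (hm.monotone hxy) (inv_nonneg.mpr hp.le)
    · exact mul_le_mul_of_nonpos_right (hm.antitone hxy) (inv_nonpos.mpr hp.le)
  have hpartial : ∀ (N : ℕ) (x : ℝ), x + ∑ k ∈ Finset.range N, e k x = F^[N] x / dR^N := by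
    intro N x
    induction N with
    | zero => simp
    | succ N ih =>
        rw [Finset.sum_range_succ, show x + (∑ k ∈ Finset.range N, e k x + e N x)
          = (x + ∑ k ∈ Finset.range N, e k x) + e N x by ring, ih,
          Function.iterate_succ_apply']
        have hFval : F (F^[N] x) = dR * F^[N] x + u (F^[N] x) := by
          simp only [hu]; ring
        rw [hFval, he]
        simp only
        rw [pow_succ]
        have hpow : dR^N ≠ 0 := pow_ne_zero _ hdRne
        field_simp
  have hHlim : ∀ x, Filter.Tendsto (fun N => F^[N] x / dR^N) atTop (nhds (H x)) := by
    intro x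
    have h1 := (hesum x).hasSum.tendsto_sum_nat
    have h2 := h1.const_add x
    have h3 : (fun N => x + ∑ k ∈ Finset.range N, e k x)
        = fun N => F^[N] x / dR^N := funext fun N => hpartial N x
    rw [h3] at h2
    exact h2
  have hHmono : Monotone H := by
    intro x y hxy
    exact le_of_tendsto_of_tendsto' (hHlim x) (hHlim y) (fun N => hGmono N hxy)
  have hHsurj : Function.Surjective H := by
    apply surj_of_lin hHc (c := (1:ℝ)) (Or.inl rfl)
    intro x
    have h1 : H x - 1 * x = ∑' n, e n x := by rw [hH]; ring
    rw [h1]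
    have hns : Summable fun n => ‖e n x‖ :=
      Summable.of_nonneg_of_le (fun n => norm_nonneg _)
        (fun n => by rw [Real.norm_eq_abs]; exact hbound n x) hbsum
    calc |∑' n, e n x| = ‖∑' n, e n x‖ := (Real.norm_eq_abs _).symm
      _ ≤ ∑' n, ‖e n x‖ := norm_tsum_le_tsum_norm hns
      _ ≤ ∑' n, bnd n := Summable.tsum_le_tsum
          (fun n => by rw [Real.norm_eq_abs]; exact hbound n x) hns hbsum
  -- descend to the circle
  set hfun : 𝕊 → 𝕊 := fun z => ((H (rep z) : ℝ) : 𝕊) with hhf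
  have hfun_coe : ∀ x : ℝ, hfun ((x:ℝ):𝕊) = ((H x : ℝ) : 𝕊) := by
    intro x
    obtain ⟨n, hn⟩ := coe_eq_coe.mp (coe_rep ((x:ℝ):𝕊))
    have hrx : rep ((x:ℝ):𝕊) = x + n := by linarith
    simp only [hhf]
    rw [hrx, hHint n x, coe_add, coe_int, add_zero]
  have hfun_cont : Continuous hfun := by
    have hq : Topology.IsQuotientMap (fun x : ℝ => ((x:ℝ):𝕊)) :=
      hcoeLH.isOpenMap.isQuotientMap continuous_quotient_mk'
        QuotientAddGroup.mk_surjective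
    rw [hq.continuous_iff]
    have hco : (hfun ∘ (fun x : ℝ => ((x:ℝ):𝕊))) = fun x : ℝ => ((H x :ℝ):𝕊) :=
      funext hfun_coe
    rw [hco]
    exact continuous_quotient_mk'.comp hHc
  have hsemi : ∀ z, hfun (f z) = d • hfun z := by
    intro z
    obtain ⟨x, rfl⟩ := QuotientAddGroup.mk_surjective z
    rw [← hFcoe x, hfun_coe, hfun_coe, hHF x]
    rw [show dR * H x = d • (H x) from (zsmul_eq_mul _ _).symm]
    exact map_zsmul pi1 d (H x)
  have hfun_surj : Function.Surjective hfun := by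
    intro z
    obtain ⟨t, rfl⟩ := QuotientAddGroup.mk_surjective z
    obtain ⟨x, hx⟩ := hHsurj t
    exact ⟨((x:ℝ):𝕊), by rw [hfun_coe, hx]⟩
  have hsemiiter : ∀ (k : ℕ) (z : 𝕊), hfun (f^[k] z) = (d^k) • hfun z := by
    intro k
    induction k with
    | zero => intro z; simp
    | succ k ih =>
        intro z
        rw [Function.iterate_succ_apply', hsemi, ih, smul_smul, ← pow_succ']
  -- injectivity of H via transitivity
  have hHkey : ∀ s t : ℝ, s < t → H s = H t → False := by
    intro s t hlt hst
    have hflat : ∀ w ∈ Icc s t, H w = H s := fun w hw =>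
      le_antisymm (hst ▸ hHmono hw.2) (hHmono hw.1)
    have hlen : t - s < 1 := by
      by_contra hge
      push_neg at hge
      have h1 := hHmono (show s + 1 ≤ t by linarith)
      rw [hHper s] at h1
      linarith [hst]
    set P : Set 𝕊 := (fun x : ℝ => ((x:ℝ):𝕊)) '' Ioo s t with hP
    have hPopen : IsOpen P := hcoeLH.isOpenMap _ isOpen_Ioo
    have hPne : P.Nonempty := ⟨_, ⟨(s+t)/2, ⟨by linarith, by linarith⟩, rfl⟩⟩
    have hPconst : ∀ z ∈ P, hfun z = ((H s : ℝ) : 𝕊) := by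
      rintro z ⟨w, hw, rfl⟩
      rw [hfun_coe, hflat w (Ioo_subset_Icc_self hw)]
    -- first visit
    obtain ⟨z1, hz1P, hz1R⟩ := hx₀.inter_open_nonempty P hPopen hPne
    obtain ⟨n1, hn1'⟩ := hz1R
    have hn1 : f^[n1] x₀ = z1 := hn1'
    -- a second, different visit
    have hdist : ∃ w1 w2 : ℝ, w1 ∈ Ioo s t ∧ w2 ∈ Ioo s t ∧
        ((w1:ℝ):𝕊) ≠ ((w2:ℝ):𝕊) := by
      refine ⟨s + (t-s)/3, s + 2*(t-s)/3, ⟨by linarith, by linarith⟩,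
        ⟨by linarith, by linarith⟩, ?_⟩
      intro hcontra
      obtain ⟨m, hm⟩ := coe_eq_coe.mp hcontra
      have hm' : (m:ℝ) = -((t-s)/3) := by linarith
      have habs : |(m:ℝ)| < 1 := by
        rw [hm', abs_neg, abs_of_pos (by linarith)]
        linarith
      have := int_eq_zero_of_abs_lt habs
      subst this
      simp at hm'
      linarith
    obtain ⟨w1, w2, hw1, hw2, hwne⟩ := hdist
    have hP2open : IsOpen (P \ {f^[n1] x₀}) := hPopen.sdiff isClosed_singleton
    have hP2ne : (P \ {f^[n1] x₀}).Nonempty := by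
      by_cases hcase : ((w1:ℝ):𝕊) = f^[n1] x₀
      · exact ⟨((w2:ℝ):𝕊), ⟨w2, hw2, rfl⟩, by
          simp only [mem_singleton_iff]
          rw [← hcase]
          exact fun hcc => hwne hcc.symm⟩
      · exact ⟨((w1:ℝ):𝕊), ⟨w1, hw1, rfl⟩, by
          simp only [mem_singleton_iff]
          exact hcase⟩
    obtain ⟨z2, hz2P, hz2R⟩ := hx₀.inter_open_nonempty _ hP2open hP2ne
    obtain ⟨n2, hn2'⟩ := hz2R
    have hn2 : f^[n2] x₀ = z2 := hn2'
    have hne12 : n1 ≠ n2 := by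
      intro hcc
      apply hz2P.2
      rw [mem_singleton_iff, ← hn2, hcc]
    set y : ℕ → 𝕊 := fun j => hfun (f^[j] x₀) with hy
    have hyadd : ∀ (k j : ℕ), y (k + j) = (d^k) • y j := by
      intro k j
      simp only [hy]
      rw [Function.iterate_add_apply, hsemiiter]
    set a := min n1 n2 with ha
    set b := max n1 n2 with hb
    have hab : a < b := by
      rcases Nat.lt_or_ge n1 n2 with hc | hc
      · rw [ha, hb, min_eq_left hc.le, max_eq_right hc.le]; exact hc
      · have hc' : n2 < n1 := by omega
        rw [ha, hb, min_eq_right hc'.le, max_eq_left hc'.le]; exact hc'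
    have hyval : y a = y b := by
      have hv1 : y n1 = ((H s : ℝ) : 𝕊) := by
        show hfun (f^[n1] x₀) = _
        rw [hn1]; exact hPconst z1 hz1P
      have hv2 : y n2 = ((H s : ℝ) : 𝕊) := by
        show hfun (f^[n2] x₀) = _
        rw [hn2]; exact hPconst z2 hz2P.1
      rcases Nat.lt_or_ge n1 n2 with hc | hc
      · rw [ha, hb, min_eq_left hc.le, max_eq_right hc.le, hv1, hv2]
      · rw [ha, hb, min_eq_right (by omega : n2 ≤ n1),
          max_eq_left (by omega : n2 ≤ n1), hv1, hv2]
    have hyper : ∀ j, a ≤ j → y (j + (b - a)) = y j := by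
      intro j hj
      have h1 : j + (b - a) = (j - a) + b := by omega
      have h2 : j = (j - a) + a := by omega
      rw [h1, hyadd (j-a) b, ← hyval, ← hyadd (j-a) a, ← h2]
    have hfin : ∀ j, ∃ i, i < b ∧ y i = y j := by
      intro j
      induction j using Nat.strong_induction_on with
      | _ j ih =>
        by_cases hj : j < b
        · exact ⟨j, hj, rfl⟩
        · push_neg at hj
          have hj' : a ≤ j - (b - a) := by omega
          have h2 := hyper (j - (b-a)) hj'
          have h3 : (j - (b-a)) + (b - a) = j := by omega
          rw [h3] at h2
          obtain ⟨i, hi, hyi⟩ := ih (j - (b-a)) (by omega)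
          exact ⟨i, hi, by rw [hyi, h2]⟩
    have hyd : Dense (Set.range y) := by
      have hre : Set.range y = hfun '' (Set.range fun n : ℕ => f^[n] x₀) := by
        rw [← Set.range_comp]
        rfl
      rw [hre]
      intro z
      obtain ⟨w, rfl⟩ := hfun_surj z
      have hw : w ∈ closure (Set.range fun n : ℕ => f^[n] x₀) := hx₀ w
      exact (image_closure_subset_closure_image hfun_cont) ⟨w, hw, rfl⟩
    have hfinset : (Set.range y) ⊆ y '' (Iio b) := by
      rintro _ ⟨j, rfl⟩
      obtain ⟨i, hi, hyi⟩ := hfin j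
      exact ⟨i, hi, hyi⟩
    have hSfin : (y '' (Iio b)).Finite := (Set.finite_Iio b).image y
    have huniv : (Set.univ : Set 𝕊) ⊆ y '' (Iio b) := by
      intro z _
      have hz : z ∈ closure (Set.range y) := hyd z
      exact (closure_minimal hfinset hSfin.isClosed) hz
    exact Set.infinite_univ (hSfin.subset huniv)
  have hHinj : Function.Injective H := by
    intro s t hst
    rcases lt_trichotomy s t with h | h | h
    · exact absurd hst (fun hc => hHkey s t h hc)
    · exact h
    · exact absurd hst (fun hc => hHkey t s h hc.symm)
  have hfun_inj : Function.Injective hfun := by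
    intro z w hzw
    obtain ⟨p, rfl⟩ := QuotientAddGroup.mk_surjective z
    obtain ⟨q, rfl⟩ := QuotientAddGroup.mk_surjective w
    rw [hfun_coe, hfun_coe] at hzw
    obtain ⟨n, hn⟩ := coe_eq_coe.mp hzw
    have heq : H p = H (q + n) := by rw [hHint n q]; linarith
    have hpq := hHinj heq
    exact coe_eq_coe.mpr ⟨n, by rw [hpq]; ring⟩
  refine ⟨d, habs2, ?_⟩
  set E : 𝕊 ≃ 𝕊 := Equiv.ofBijective hfun ⟨hfun_inj, hfun_surj⟩ with hE
  refine ⟨Continuous.homeoOfEquivCompactToT2 (f := E) hfun_cont, fun z => hsemi z⟩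
end
end

section
/- Let f: S¹ → S¹ be a continuous circle map of degree d with |d| ≥ 2, semiconjugate to the linear expanding map E_d via a monotone degree-one surjection h (i.e., h∘f = E_d∘h). If f is transitive, then h is injective, hence a conjugacy. -/
private lemma addCircle_infinite : Infinite (AddCircle (1 : ℝ)) := by
  haveI : Fact ((0:ℝ) < 1) := ⟨one_pos⟩
  have e := AddCircle.equivIco (1:ℝ) 0
  haveI : Infinite (Set.Ioo (0:ℝ) (0 + 1)) := Set.Ioo.infinite (show (0:ℝ) < 0 + 1 by norm_num)
  haveI : Infinite (Set.Ico (0:ℝ) (0 + 1)) := Set.infinite_coe_iff.mpr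
    ((Set.infinite_coe_iff.mp ‹Infinite (Set.Ioo (0:ℝ) (0 + 1))›).mono Set.Ioo_subset_Ico_self)
  exact (Equiv.infinite_iff e.symm).mp inferInstance

private lemma coe_eq_coe_int (x y : ℝ) (hxy : (x : AddCircle (1:ℝ)) = y) :
    ∃ n : ℤ, x - y = n := by
  rw [← sub_eq_zero, ← AddCircle.coe_sub] at hxy
  obtain ⟨n, hn⟩ := (AddCircle.coe_eq_zero_iff (1:ℝ)).mp hxy
  exact ⟨n, by simpa using hn.symm⟩

private lemma coe_int_eq (x : ℝ) (n : ℤ) : ((x + n : ℝ) : AddCircle (1:ℝ)) = x := by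
  rw [← sub_eq_zero, ← AddCircle.coe_sub, AddCircle.coe_eq_zero_iff (1:ℝ)]
  exact ⟨n, by simp⟩

/-- If a degree-`d` circle map (`|d| ≥ 2`) is semiconjugate to the linear
expanding map `E_d` by a monotone degree-one surjection `h`, and `f` is transitive, then
`h` is injective (hence a conjugacy). -/
theorem semiconjugacy_injective_of_transitive
    (d : ℤ) (hd : 2 ≤ |d|)
    (f h : AddCircle (1 : ℝ) → AddCircle (1 : ℝ))
    (hf : Continuous f) (hh : Continuous h) (hhsurj : Function.Surjective h)
    -- `F` is a lift of `f` of degree `d`: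
    (F : ℝ → ℝ) (hFc : Continuous F)
    (hFlift : ∀ x : ℝ, f (x : AddCircle (1 : ℝ)) = (F x : AddCircle (1 : ℝ)))
    (hFdeg : ∀ x : ℝ, F (x + 1) = F x + d)
    -- `H` is a monotone degree-one lift of `h`:
    (H : ℝ → ℝ) (hHc : Continuous H) (hHm : Monotone H)
    (hHlift : ∀ x : ℝ, h (x : AddCircle (1 : ℝ)) = (H x : AddCircle (1 : ℝ)))
    (hHdeg : ∀ x : ℝ, H (x + 1) = H x + 1)
    -- semiconjugacy to `E_d`:
    (hsemi : ∀ x, h (f x) = d • h x)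
    -- transitivity of `f`:
    (htrans : ∃ x₀, Dense (Set.range fun n : ℕ => f^[n] x₀)) :
    Function.Injective h := by
  -- iterated semiconjugacy
  have hiter : ∀ (j : ℕ) (x : AddCircle (1:ℝ)), h (f^[j] x) = d ^ j • h x := by
    intro j x
    induction j with
    | zero => simp
    | succ j ih =>
      rw [Function.iterate_succ_apply', hsemi, ih, smul_smul, ← pow_succ']
  by_contra hinj
  rw [Function.Injective] at hinj
  push_neg at hinj
  obtain ⟨a, b, hab, hne⟩ := hinj
  obtain ⟨A, rfl⟩ := QuotientAddGroup.mk_surjective a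
  obtain ⟨B, rfl⟩ := QuotientAddGroup.mk_surjective b
  set B' : ℝ := B - ⌊B - A⌋ with hB'def
  have hBB' : (B : AddCircle (1:ℝ)) = (B' : ℝ) := by
    have := coe_int_eq B' ⌊B - A⌋
    rw [hB'def] at this ⊢
    rw [show B - ↑⌊B - A⌋ + (⌊B - A⌋ : ℝ) = B by ring] at this
    exact this
  have hfrac0 : (0:ℝ) ≤ B' - A := by
    have := Int.floor_le (B - A); rw [hB'def]; linarith
  have hfrac1 : B' - A < 1 := by
    have := Int.lt_floor_add_one (B - A); rw [hB'def]; linarith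
  have hAB' : A < B' := by
    rcases lt_or_eq_of_le hfrac0 with h1 | h1
    · linarith
    · exfalso
      apply hne
      have : B' = A := by linarith
      rw [hBB', this]
  have hB'A1 : B' < A + 1 := by linarith
  -- H A and H B' differ by an integer μ ∈ {0,1}
  obtain ⟨μ, hμ⟩ : ∃ μ : ℤ, H B' - H A = μ := by
    apply coe_eq_coe_int
    rw [← hHlift, ← hHlift, ← hBB', hab]
  have hmono1 : H A ≤ H B' := hHm hAB'.le
  have hmono2 : H B' ≤ H A + 1 := by
    have := hHm hB'A1.le; rw [hHdeg] at this; exact this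
  have hμ01 : μ = 0 ∨ μ = 1 := by
    have h0 : (0:ℝ) ≤ μ := by rw [← hμ]; linarith
    have h1 : (μ:ℝ) ≤ 1 := by rw [← hμ]; linarith
    have h0' : (0:ℤ) ≤ μ := by exact_mod_cast h0
    have h1' : μ ≤ 1 := by exact_mod_cast h1
    omega
  -- get s < t with H constant on [s,t], t - s ≤ 1
  obtain ⟨s, t, hst, hts1, hconst⟩ :
      ∃ s t : ℝ, s < t ∧ t - s ≤ 1 ∧ ∀ x ∈ Set.Icc s t, H x = H s := by
    rcases hμ01 with hμ0 | hμ1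
    · refine ⟨A, B', hAB', by linarith, fun x hx => le_antisymm ?_ (hHm hx.1)⟩
      have hx2 : H x ≤ H B' := hHm hx.2
      rw [hμ0] at hμ; push_cast at hμ; linarith
    · refine ⟨B', A + 1, hB'A1, by linarith, fun x hx => le_antisymm ?_ (hHm hx.1)⟩
      have hx2 : H x ≤ H (A + 1) := hHm hx.2
      rw [hHdeg] at hx2
      rw [hμ1] at hμ; push_cast at hμ; linarith
  -- h is constant (= c) on the open arc (image of Ioo s t)
  set c : AddCircle (1:ℝ) := ((H s : ℝ) : AddCircle (1:ℝ)) with hcdef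
  have hUconst : ∀ x ∈ Set.Ioo s t, h ((x : ℝ) : AddCircle (1:ℝ)) = c := by
    intro x hx
    rw [hHlift, hconst x (Set.Ioo_subset_Icc_self hx)]
  -- coe is injective on Ioo s t
  have hinjcoe : ∀ x ∈ Set.Ioo s t, ∀ y ∈ Set.Ioo s t,
      ((x : ℝ) : AddCircle (1:ℝ)) = (y : ℝ) → x = y := by
    intro x hx y hy hxy
    obtain ⟨n, hn⟩ := coe_eq_coe_int x y hxy
    have h1 : (n:ℝ) < 1 := by
      rw [← hn]; obtain ⟨hx1, hx2⟩ := hx; obtain ⟨hy1, hy2⟩ := hy; linarith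
    have h2 : (-1:ℝ) < (n:ℝ) := by
      rw [← hn]; obtain ⟨hx1, hx2⟩ := hx; obtain ⟨hy1, hy2⟩ := hy; linarith
    have h1' : n < 1 := by exact_mod_cast h1
    have h2' : -1 < n := by exact_mod_cast h2
    have hn0 : n = 0 := by omega
    rw [hn0] at hn
    push_cast at hn
    linarith
  -- two disjoint open nonempty subsets of the arc
  set mid := (s + t) / 2 with hmid
  have hsm : s < mid := by rw [hmid]; linarith
  have hmt : mid < t := by rw [hmid]; linarith
  have hopen : IsOpenMap ((↑) : ℝ → AddCircle (1:ℝ)) := QuotientAddGroup.isOpenMap_coe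
  obtain ⟨x₀, hdense⟩ := htrans
  -- find a visit time into each half-arc
  obtain ⟨y₁, hy₁r, hy₁U⟩ := hdense.exists_mem_open (hopen _ (isOpen_Ioo (a := s) (b := mid)))
    ⟨_, ⟨(s + mid)/2, ⟨by linarith, by linarith⟩, rfl⟩⟩
  obtain ⟨y₂, hy₂r, hy₂U⟩ := hdense.exists_mem_open (hopen _ (isOpen_Ioo (a := mid) (b := t)))
    ⟨_, ⟨(mid + t)/2, ⟨by linarith, by linarith⟩, rfl⟩⟩
  obtain ⟨p, hp⟩ := hy₁r
  obtain ⟨q, hq⟩ := hy₂r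
  simp only at hp hq
  obtain ⟨u₁, hu₁, he₁⟩ := hy₁U
  obtain ⟨u₂, hu₂, he₂⟩ := hy₂U
  have hcp : h (f^[p] x₀) = c := by
    rw [hp, ← he₁]; exact hUconst u₁ ⟨hu₁.1, hu₁.2.trans hmt⟩
  have hcq : h (f^[q] x₀) = c := by
    rw [hq, ← he₂]; exact hUconst u₂ ⟨hsm.trans hu₂.1, hu₂.2⟩
  have hpq : p ≠ q := by
    rintro rfl
    have heq : u₁ = u₂ := by
      apply hinjcoe u₁ ⟨hu₁.1, hu₁.2.trans hmt⟩ u₂ ⟨hsm.trans hu₂.1, hu₂.2⟩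
      rw [he₁, he₂, ← hp, ← hq]
    have := hu₁.2
    have := hu₂.1
    linarith [heq ▸ hu₁.2]
  -- normalize: n < m, both giving value c
  set n := min p q with hn
  set m := max p q with hm
  have hnm : n < m := min_lt_max.mpr hpq
  have hval_pq : ∀ j : ℕ, j = p ∨ j = q → d ^ j • h x₀ = c := by
    rintro j (rfl | rfl)
    · rw [← hiter]; exact hcp
    · rw [← hiter]; exact hcq
  have hcn : d ^ n • h x₀ = c := hval_pq n (min_choice p q)
  have hcm : d ^ m • h x₀ = c := hval_pq m (max_choice p q)
  set k := m - n with hk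
  have hk0 : 0 < k := by omega
  -- periodicity: d^k • c = c
  have hkc : d ^ k • c = c := by
    calc d ^ k • c = d ^ k • (d ^ n • h x₀) := by rw [hcn]
      _ = (d ^ k * d ^ n) • h x₀ := by rw [smul_smul]
      _ = d ^ m • h x₀ := by
          rw [← pow_add]
          have hknm : k + n = m := by omega
          rw [hknm]
      _ = c := hcm
  have hper : ∀ r : ℕ, (d ^ k) ^ r • c = c := by
    intro r
    induction r with
    | zero => simp
    | succ r ih => rw [pow_succ, mul_smul, hkc, ih]
  have hmod : ∀ i : ℕ, d ^ i • c = d ^ (i % k) • c := by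
    intro i
    conv_lhs => rw [← Nat.mod_add_div i k]
    rw [pow_add, mul_smul, pow_mul, hper]
  -- all orbit values lie in a finite set
  have hval : ∀ j : ℕ, ∃ r < m, h (f^[j] x₀) = d ^ r • h x₀ := by
    intro j
    rcases lt_or_ge j n with hj | hj
    · exact ⟨j, by omega, hiter j x₀⟩
    · refine ⟨(j - n) % k + n, by have := Nat.mod_lt (j - n) hk0; omega, ?_⟩
      have e1 : h (f^[j] x₀) = d ^ (j - n) • c := by
        rw [hiter, ← hcn, smul_smul, ← pow_add]
        have hnj : j - n + n = j := by omega
        rw [hnj]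
      rw [e1, hmod, ← hcn, smul_smul, ← pow_add]
  set T : Finset (AddCircle (1:ℝ)) := (Finset.range m).image (fun r => d ^ r • h x₀) with hT
  have hsub : Set.range (fun j : ℕ => f^[j] x₀) ⊆ h ⁻¹' (↑T : Set (AddCircle (1:ℝ))) := by
    rintro _ ⟨j, rfl⟩
    obtain ⟨r, hr, he⟩ := hval j
    simp only [Set.mem_preimage, Finset.coe_image, Finset.coe_range, Set.mem_image,
      Set.mem_Iio, hT]
    exact ⟨r, hr, he.symm⟩
  have hclosed : IsClosed (h ⁻¹' (↑T : Set (AddCircle (1:ℝ)))) :=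
    (T.finite_toSet.isClosed).preimage hh
  have hall : ∀ y, h y ∈ (↑T : Set (AddCircle (1:ℝ))) := by
    intro y
    have hy : y ∈ closure (Set.range fun j : ℕ => f^[j] x₀) := hdense y
    exact closure_minimal hsub hclosed hy
  have hfin : (Set.univ : Set (AddCircle (1:ℝ))).Finite := by
    apply T.finite_toSet.subset
    intro w _
    obtain ⟨y, rfl⟩ := hhsurj w
    exact hall y
  haveI := addCircle_infinite
  exact Set.infinite_univ hfin
end

section
/- Let f: S¹ → S¹ be a transitive continuous circle map without turning points (i.e., a monotone local homeomorphism) that is not a homeomorphism. Then for every nonempty open interval I ⊂ S¹ and every x ∈ S¹, there exist n > 0 and y ∈ I with f^n(y) = x; in other words, ⋃_{n≥0} f^n(I) = S¹. -/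
open Set Function

namespace Statement11


local notation "𝕊" => AddCircle (1 : ℝ)

/-- Lift a continuous map `ℝ → 𝕊` over the projection, on a compact interval. -/
lemma lift_on_Icc {h : ℝ → 𝕊} (hc : Continuous h) (s t : ℝ) :
    ∃ θ : ℝ → ℝ, ContinuousOn θ (Icc s t) ∧ ∀ u ∈ Icc s t, ((θ u : ℝ) : 𝕊) = h u := by
  haveI : Fact ((0:ℝ) < 1) := ⟨one_pos⟩
  obtain ⟨δ, hδ, hunif⟩ : ∃ δ > 0, ∀ u ∈ Icc s t, ∀ v ∈ Icc s t,
      |u - v| < δ → dist (h u) (h v) < 1/2 := by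
    have H := (isCompact_Icc (a := s) (b := t)).uniformContinuousOn_of_continuous
      hc.continuousOn
    rw [Metric.uniformContinuousOn_iff] at H
    obtain ⟨δ, hδ, H⟩ := H (1/2) (by norm_num)
    exact ⟨δ, hδ, fun u hu v hv huv => H u hu v hv (by rwa [Real.dist_eq])⟩
  have triv : ∀ a b : ℝ, b ≤ a → ∃ θ : ℝ → ℝ, ContinuousOn θ (Icc a b) ∧
      ∀ u ∈ Icc a b, ((θ u : ℝ) : 𝕊) = h u := by
    intro a b hba
    refine ⟨fun _ => ((AddCircle.equivIco 1 0 (h a) : ℝ)), continuousOn_const, ?_⟩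
    intro u hu
    have hua : u = a := le_antisymm (hu.2.trans hba) hu.1
    subst hua
    exact (AddCircle.equivIco 1 0).symm_apply_apply (h u)
  suffices H : ∀ n : ℕ, ∀ a b : ℝ, a ∈ Icc s t → b ∈ Icc s t → b - a ≤ n * (δ/2) →
      ∃ θ : ℝ → ℝ, ContinuousOn θ (Icc a b) ∧ ∀ u ∈ Icc a b, ((θ u : ℝ) : 𝕊) = h u by
    rcases le_or_gt s t with hst | hst
    · obtain ⟨n, hn⟩ := exists_nat_ge ((t - s)/(δ/2))
      have h2 : (0:ℝ) < δ/2 := by linarith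
      have : t - s ≤ n * (δ/2) := by
        rw [div_le_iff₀ h2] at hn
        linarith
      exact H n s t ⟨le_refl s, hst⟩ ⟨hst, le_refl t⟩ this
    · exact triv s t hst.le
  intro n
  induction n with
  | zero =>
    intro a b _ _ hab
    exact triv a b (by linarith [hab])
  | succ n IH =>
    intro a b ha hb hab
    rcases le_or_gt b a with hba | hab'
    · exact triv a b hba
    · set r := max a (b - δ/2) with hr
      have har : a ≤ r := le_max_left _ _
      have hrb : r ≤ b := max_le hab'.le (by linarith)
      have hrt : r ∈ Icc s t := ⟨le_trans ha.1 har, le_trans hrb hb.2⟩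
      have hbr : b - r ≤ δ/2 := by
        have : b - δ/2 ≤ r := le_max_right _ _
        linarith
      have hra : r - a ≤ n * (δ/2) := by
        have hn0 : (0:ℝ) ≤ (n:ℝ) := n.cast_nonneg
        rcases max_cases a (b - δ/2) with ⟨h1, _⟩ | ⟨h1, _⟩ <;> rw [hr, h1] <;>
          push_cast at hab ⊢ <;> nlinarith
      obtain ⟨θ₀, hθ₀c, hθ₀⟩ := IH a r ha hrt hra
      -- the "bad point" c : avoid it on the last cell
      set c : ℝ := ((AddCircle.equivIco 1 0 (h r) : ℝ)) + 1/2 with hc'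
      have hrep : ((AddCircle.equivIco 1 0 (h r) : ℝ) : 𝕊) = h r :=
        (AddCircle.equivIco 1 0).symm_apply_apply (h r)
      have hcdist : dist ((c : ℝ) : 𝕊) (h r) = 1/2 := by
        rw [dist_eq_norm]
        have : ((c : ℝ) : 𝕊) - h r = (((1:ℝ)/2 : ℝ) : 𝕊) := by
          rw [hc', AddCircle.coe_add, hrep]
          abel
        rw [this]
        simpa using AddCircle.norm_half_period_eq (1:ℝ)
      have hcirc : ∀ u ∈ Icc r b, h u ≠ ((c : ℝ) : 𝕊) := by
        intro u hu heq
        have h1 : dist (h u) (h r) < 1/2 := by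
          refine hunif u ⟨hrt.1.trans hu.1, hu.2.trans hb.2⟩ r hrt ?_
          rw [abs_sub_lt_iff]
          constructor <;> [skip; linarith [hu.1]]
          linarith [hu.2]
        rw [heq, hcdist] at h1
        exact lt_irrefl _ h1
      set lam : ℝ → ℝ := fun u => ((AddCircle.equivIco 1 c (h u) : ℝ)) with hlamdef
      have hlamc : ContinuousOn lam (Icc r b) := by
        intro u hu
        have h1 : ContinuousAt (fun z : 𝕊 => ((AddCircle.equivIco 1 c z : ℝ))) (h u) :=
          continuous_subtype_val.continuousAt.comp
            (AddCircle.continuousAt_equivIco 1 c (hcirc u hu))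
        exact (h1.comp hc.continuousAt).continuousWithinAt
      have hlam : ∀ u, ((lam u : ℝ) : 𝕊) = h u := fun u =>
        (AddCircle.equivIco 1 c).symm_apply_apply (h u)
      refine ⟨fun u => θ₀ (min u r) + (lam (max u r) - lam r), ?_, ?_⟩
      · have hmin : ContinuousOn (fun u : ℝ => θ₀ (min u r)) (Icc a b) := by
          refine hθ₀c.comp ((continuous_id.min continuous_const).continuousOn) ?_
          intro u hu
          exact ⟨le_min hu.1 har, min_le_right _ _⟩
        have hmax : ContinuousOn (fun u : ℝ => lam (max u r)) (Icc a b) := by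
          refine hlamc.comp ((continuous_id.max continuous_const).continuousOn) ?_
          intro u hu
          exact ⟨le_max_right _ _, max_le hu.2 hrb⟩
        exact hmin.add (hmax.sub continuousOn_const)
      · intro u hu
        show ((θ₀ (min u r) + (lam (max u r) - lam r) : ℝ) : 𝕊) = h u
        rcases le_total u r with h1 | h1
        · rw [min_eq_left h1, max_eq_right h1, sub_self, add_zero]
          exact hθ₀ u ⟨hu.1, h1⟩
        · rw [min_eq_right h1, max_eq_left h1, AddCircle.coe_add, AddCircle.coe_sub,
            hθ₀ r ⟨har, le_refl r⟩, hlam u, hlam r]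
          abel




/-- helper: a continuous locally injective function on `[x,y]` with equal endpoint values
has its maximum at the endpoints. -/
lemma max_le_endpoints {φ : ℝ → ℝ} {a b x y c : ℝ} (hxy : x < y)
    (hsub : Icc x y ⊆ Icc a b) (hc : ContinuousOn φ (Icc a b))
    (hloc : ∀ u ∈ Icc a b, ∃ ε > 0, InjOn φ (Ioo (u-ε) (u+ε) ∩ Icc a b))
    (hval : φ x = φ y) (hcmem : c ∈ Icc x y) (hmax : IsMaxOn φ (Icc x y) c) :
    φ c ≤ φ x := by
  by_contra hlt
  push_neg at hlt
  have hcab : c ∈ Icc a b := hsub hcmem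
  have hcx : c ≠ x := fun h => by rw [h] at hlt; exact lt_irrefl _ hlt
  have hcy : c ≠ y := fun h => by rw [h, ← hval] at hlt; exact lt_irrefl _ hlt
  have hxc : x < c := lt_of_le_of_ne hcmem.1 (Ne.symm hcx)
  have hcyy : c < y := lt_of_le_of_ne hcmem.2 hcy
  obtain ⟨ε, hε, hinj⟩ := hloc c hcab
  set ε' : ℝ := min ε (min (c - x) (y - c)) with hε'
  have hε'0 : 0 < ε' := lt_min hε (lt_min (by linarith) (by linarith))
  have hε'ε : ε' ≤ ε := min_le_left _ _
  have hε'x : ε' ≤ c - x := (min_le_right _ _).trans (min_le_left _ _)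
  have hε'y : ε' ≤ y - c := (min_le_right _ _).trans (min_le_right _ _)
  set u := c - ε'/2 with hu
  set v := c + ε'/2 with hv
  have huv : ∀ w ∈ Icc u v, w ∈ Ioo (c-ε) (c+ε) ∩ Icc a b := by
    intro w hw
    refine ⟨⟨by simp only [hu] at hw; cases hw; linarith, ?_⟩, hsub ⟨?_, ?_⟩⟩
    · simp only [hv] at hw; obtain ⟨_, h2⟩ := hw; linarith
    · obtain ⟨h1, _⟩ := hw; simp only [hu] at h1; linarith
    · obtain ⟨_, h2⟩ := hw; simp only [hv] at h2; linarith
  have hcmem' : ∀ w ∈ Icc u v, w ∈ Icc x y := fun w hw =>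
    ⟨by obtain ⟨h1, _⟩ := hw; simp only [hu] at h1; linarith,
     by obtain ⟨_, h2⟩ := hw; simp only [hv] at h2; linarith⟩
  have hcont : ∀ p q : ℝ, u ≤ p → q ≤ v → ContinuousOn φ (Icc p q) :=
    fun p q hp hq => hc.mono fun w hw => hsub (hcmem' w ⟨hp.trans hw.1, hw.2.trans hq⟩)
  have hne : ∀ w ∈ Icc u v, w ≠ c → φ w < φ c := by
    intro w hw hwc
    rcases lt_or_eq_of_le (isMaxOn_iff.mp hmax w (hcmem' w hw)) with h | h
    · exact h
    · exact absurd (hinj (huv w hw) (huv c ⟨by simp [hu]; linarith, by simp [hv]; linarith⟩) h)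
        hwc
  have hu1 : u ∈ Icc u v := ⟨le_refl u, by simp [hu, hv]; linarith⟩
  have hv1 : v ∈ Icc u v := ⟨by simp [hu, hv]; linarith, le_refl v⟩
  have hphiu : φ u < φ c := hne u hu1 (by simp [hu]; linarith)
  have hphiv : φ v < φ c := hne v hv1 (by simp [hv]; linarith)
  have hw1 : max (φ u) (φ v) < φ c := max_lt hphiu hphiv
  have huc : u ≤ c := by simp [hu]; linarith
  have hcv : c ≤ v := by simp [hv]; linarith
  obtain ⟨p, hp, hphip⟩ := intermediate_value_Icc huc (hcont u c (le_refl u) hcv)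
    ⟨le_max_left _ _, hw1.le⟩
  obtain ⟨q, hq, hphiq⟩ := intermediate_value_Icc' hcv (hcont c v huc (le_refl v))
    ⟨le_max_right _ _, hw1.le⟩
  have hpc : p ≠ c := by
    intro h
    rw [h] at hphip
    rw [hphip] at hw1
    exact lt_irrefl _ hw1
  have hqc : q ≠ c := by
    intro h
    rw [h] at hphiq
    rw [hphiq] at hw1
    exact lt_irrefl _ hw1
  have hpq : p ≠ q := by
    intro h
    exact hpc (le_antisymm hp.2 (h ▸ hq.1))
  have hpuv : p ∈ Icc u v := ⟨hp.1, hp.2.trans hcv⟩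
  have hquv : q ∈ Icc u v := ⟨huc.trans hq.1, hq.2⟩
  exact hpq (hinj (huv p hpuv) (huv q hquv) (hphip.trans hphiq.symm))

lemma injOn_of_locally_injOn {φ : ℝ → ℝ} {a b : ℝ} (hc : ContinuousOn φ (Icc a b))
    (hloc : ∀ u ∈ Icc a b, ∃ ε > 0, InjOn φ (Ioo (u-ε) (u+ε) ∩ Icc a b)) :
    InjOn φ (Icc a b) := by
  have key : ∀ x y, x ∈ Icc a b → y ∈ Icc a b → x < y → φ x ≠ φ y := by
    intro x y hx hy hxy hval
    have hsub : Icc x y ⊆ Icc a b := Icc_subset_Icc hx.1 hy.2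
    -- max at endpoints
    obtain ⟨c, hcmem, hmax⟩ := isCompact_Icc.exists_isMaxOn (nonempty_Icc.2 hxy.le)
      (hc.mono hsub)
    have hmaxval : φ c ≤ φ x := max_le_endpoints hxy hsub hc hloc hval hcmem hmax
    -- min at endpoints, by applying the max lemma to -φ
    have hlocneg : ∀ u ∈ Icc a b, ∃ ε > 0, InjOn (fun w => -φ w) (Ioo (u-ε) (u+ε) ∩ Icc a b) := by
      intro u hu
      obtain ⟨ε, hε, hinj⟩ := hloc u hu
      exact ⟨ε, hε, fun p hp q hq h => hinj hp hq (neg_injective h)⟩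
    obtain ⟨c', hcmem', hmin⟩ := isCompact_Icc.exists_isMinOn (nonempty_Icc.2 hxy.le)
      (hc.mono hsub)
    have hminval : -φ c' ≤ -φ x := by
      refine max_le_endpoints (φ := fun w => -φ w) hxy hsub hc.neg hlocneg
        (neg_inj.mpr hval) hcmem' ?_
      rw [isMaxOn_iff]
      intro w hw
      exact neg_le_neg (isMinOn_iff.mp hmin w hw)
    -- φ is constant on [x,y]
    have hconst : ∀ w ∈ Icc x y, φ w = φ x := by
      intro w hw
      have h1 : φ w ≤ φ x := le_trans (isMaxOn_iff.mp hmax w hw) hmaxval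
      have h2 : φ x ≤ φ w := le_trans (by linarith) (isMinOn_iff.mp hmin w hw)
      linarith
    -- contradiction with local injectivity at x
    obtain ⟨ε, hε, hinj⟩ := hloc x hx
    set z := min y (x + ε/2) with hz
    have hzx : x < z := lt_min hxy (by linarith)
    have hzy : z ∈ Icc x y := ⟨hzx.le, min_le_left _ _⟩
    have h1 : z ∈ Ioo (x-ε) (x+ε) ∩ Icc a b := by
      refine ⟨⟨by linarith, ?_⟩, hsub hzy⟩
      calc z ≤ x + ε/2 := min_le_right _ _
        _ < x + ε := by linarith
    have h2 : x ∈ Ioo (x-ε) (x+ε) ∩ Icc a b := ⟨⟨by linarith, by linarith⟩, hx⟩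
    exact (ne_of_gt hzx) (hinj h1 h2 (hconst z hzy))
  intro x hx y hy hval
  rcases lt_trichotomy x y with h | h | h
  · exact absurd hval (key x y hx hy h)
  · exact h
  · exact absurd hval.symm (key y x hy hx h)


lemma injOn_of_image_ne_univ {f : 𝕊 → 𝕊} (hf : Continuous f) (hlocal : IsLocalHomeomorph f)
    {C : Set 𝕊} (hCo : IsOpen C) (hCc : IsPreconnected C) (him : f '' C ≠ univ) :
    InjOn f C := by
  haveI : Fact ((0:ℝ) < 1) := ⟨one_pos⟩
  intro x hx y hy hfxy
  by_contra hne
  obtain ⟨u, rfl⟩ : ∃ u : ℝ, (u : 𝕊) = x := by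
    induction x using QuotientAddGroup.induction_on
    exact ⟨_, rfl⟩
  set F : Set ℝ := ((↑) : ℝ → 𝕊) ⁻¹' C with hF
  have hFo : IsOpen F := hCo.preimage continuous_quotient_mk'
  have huF : u ∈ F := hx
  set J := connectedComponentIn F u with hJ
  have hJo : IsOpen J := hFo.connectedComponentIn
  have hJF : J ⊆ F := connectedComponentIn_subset F u
  have hJconn : IsPreconnected J := isPreconnected_connectedComponentIn
  have hJsubC : ((↑) : ℝ → 𝕊) '' J ⊆ C := fun z ⟨j, hj, hje⟩ => hje ▸ hJF hj
  -- C is contained in the image of J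
  have hA : C ⊆ ((↑) : ℝ → 𝕊) '' J := by
    set A := ((↑) : ℝ → 𝕊) '' J with hAdef
    have hAo : IsOpen A := QuotientAddGroup.isOpenMap_coe _ hJo
    have hclos : ∀ z ∈ C, z ∈ closure A → z ∈ A := by
      intro z hz hzc
      obtain ⟨ε, hε, hball⟩ := Metric.isOpen_iff.mp hCo z hz
      obtain ⟨w, hwA, hwz⟩ := Metric.mem_closure_iff.mp hzc ε hε
      obtain ⟨jw, hjwJ, rfl⟩ := hwA
      have hnorm : ‖z - ((jw : ℝ) : 𝕊)‖ < ε := by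
        rw [← dist_eq_norm]
        exact hwz
      obtain ⟨ρ, hρeq, hρ⟩ := QuotientAddGroup.norm_lt_iff.mp hnorm
      rw [Real.norm_eq_abs] at hρ
      have hzeq : ((jw + ρ : ℝ) : 𝕊) = z := by
        rw [AddCircle.coe_add, hρeq]
        abel
      have hseg : Icc (jw + min 0 ρ) (jw + max 0 ρ) ⊆ F := by
        intro q hq
        have hq1 : min 0 ρ ≤ q - jw := by linarith [hq.1]
        have hq2 : q - jw ≤ max 0 ρ := by linarith [hq.2]
        have habs : |(q - jw) - ρ| ≤ |ρ| := by
          rcases le_total 0 ρ with h | h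
          · rw [min_eq_left h] at hq1
            rw [max_eq_right h] at hq2
            rw [abs_of_nonpos (by linarith), abs_of_nonneg h]
            linarith
          · rw [min_eq_right h] at hq1
            rw [max_eq_left h] at hq2
            rw [abs_of_nonneg (by linarith), abs_of_nonpos h]
            linarith
        have hdist : dist ((q : ℝ) : 𝕊) z < ε := by
          rw [← hzeq, dist_eq_norm, ← AddCircle.coe_sub]
          calc ‖((q - (jw + ρ) : ℝ) : 𝕊)‖ ≤ ‖q - (jw + ρ)‖ := QuotientAddGroup.norm_mk_le_norm
            _ = |(q - jw) - ρ| := by rw [Real.norm_eq_abs]; ring_nf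
            _ ≤ |ρ| := habs
            _ < ε := hρ
        exact hball hdist
      have hmemseg : jw ∈ Icc (jw + min 0 ρ) (jw + max 0 ρ) :=
        ⟨by linarith [min_le_left 0 ρ], by linarith [le_max_left 0 ρ]⟩
      have hsub2 : Icc (jw + min 0 ρ) (jw + max 0 ρ) ⊆ J := by
        rw [hJ, connectedComponentIn_eq hjwJ]
        exact isPreconnected_Icc.subset_connectedComponentIn hmemseg hseg
      refine ⟨jw + ρ, hsub2 ⟨?_, ?_⟩, hzeq⟩
      · linarith [min_le_right 0 ρ]
      · linarith [le_max_right 0 ρ]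
    by_contra hnsub
    obtain ⟨z0, hz0C, hz0A⟩ := not_subset.mp hnsub
    have hcover : C ⊆ A ∪ (closure A)ᶜ := by
      intro z hz
      by_cases h : z ∈ closure A
      · exact Or.inl (hclos z hz h)
      · exact Or.inr h
    have h1 : (C ∩ A).Nonempty := ⟨((u:ℝ):𝕊), hx, ⟨u, mem_connectedComponentIn huF, rfl⟩⟩
    have h2 : (C ∩ (closure A)ᶜ).Nonempty :=
      ⟨z0, hz0C, fun hc => hz0A (hclos z0 hz0C hc)⟩
    obtain ⟨z1, _, hz1A, hz1c⟩ := hCc A (closure A)ᶜ hAo isClosed_closure.isOpen_compl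
      hcover h1 h2
    exact hz1c (subset_closure hz1A)
  obtain ⟨v, hvJ, hvy⟩ := hA hy
  have huv : u ≠ v := by
    intro h
    exact hne (by rw [← hvy, ← h])
  set u₁ := min u v with hu₁
  set u₂ := max u v with hu₂
  have h12 : u₁ < u₂ := min_lt_max.mpr huv
  have huJ : u ∈ J := mem_connectedComponentIn huF
  have hIccJ : Icc u₁ u₂ ⊆ J := by
    rcases le_total u v with h | h
    · rw [hu₁, hu₂, min_eq_left h, max_eq_right h]
      exact (hJconn.ordConnected).out huJ hvJ
    · rw [hu₁, hu₂, min_eq_right h, max_eq_left h]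
      exact (hJconn.ordConnected).out hvJ huJ
  obtain ⟨θ, hθc, hθ⟩ := lift_on_Icc (hf.comp continuous_quotient_mk') u₁ u₂
  have hπθ : ∀ w ∈ Icc u₁ u₂, ((θ w : ℝ) : 𝕊) = f ((w : ℝ) : 𝕊) := hθ
  -- local injectivity of θ
  have hlocinj : ∀ w ∈ Icc u₁ u₂, ∃ ε > 0, InjOn θ (Ioo (w-ε) (w+ε) ∩ Icc u₁ u₂) := by
    intro w hw
    obtain ⟨e, hwe, heq⟩ := (hlocal.comp (AddCircle.isLocalHomeomorph_coe 1)) w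
    obtain ⟨ε, hε, hball⟩ := Metric.isOpen_iff.mp e.open_source w hwe
    rw [Real.ball_eq_Ioo] at hball
    refine ⟨ε, hε, ?_⟩
    intro p hp q hq hpq
    have h1 : (f ∘ ((↑) : ℝ → 𝕊)) p = (f ∘ ((↑) : ℝ → 𝕊)) q := by
      show f _ = f _
      rw [← hπθ p hp.2, ← hπθ q hq.2, hpq]
    rw [heq] at h1
    exact e.injOn (hball hp.1) (hball hq.1) h1
  have hinjθ := injOn_of_locally_injOn hθc hlocinj
  have hmem1 : u₁ ∈ Icc u₁ u₂ := ⟨le_refl _, h12.le⟩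
  have hmem2 : u₂ ∈ Icc u₁ u₂ := ⟨h12.le, le_refl _⟩
  have hne12 : θ u₁ ≠ θ u₂ := by
    intro h
    exact ne_of_lt h12 (hinjθ hmem1 hmem2 h)
  have hfval : ∀ w : ℝ, w = u ∨ w = v → f ((w:ℝ) : 𝕊) = f ((u:ℝ):𝕊) := by
    rintro w (rfl | rfl)
    · rfl
    · rw [hvy, ← hfxy]
  have hmm1 : u₁ = u ∨ u₁ = v := by
    rcases le_total u v with h | h
    · exact Or.inl (min_eq_left h)
    · exact Or.inr (min_eq_right h)
  have hmm2 : u₂ = u ∨ u₂ = v := by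
    rcases le_total u v with h | h
    · exact Or.inr (max_eq_right h)
    · exact Or.inl (max_eq_left h)
  have hval : ((θ u₁ : ℝ) : 𝕊) = ((θ u₂ : ℝ) : 𝕊) := by
    rw [hπθ u₁ hmem1, hπθ u₂ hmem2, hfval u₁ hmm1, hfval u₂ hmm2]
  have hdiff0 : ((θ u₂ - θ u₁ : ℝ) : 𝕊) = 0 := by
    rw [AddCircle.coe_sub, hval, sub_self]
  obtain ⟨k, hk⟩ := (AddCircle.coe_eq_zero_iff (1:ℝ)).mp hdiff0
  have hk0 : k ≠ 0 := by
    intro h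
    rw [h] at hk
    simp at hk
    exact hne12 (by linarith)
  have hgap : 1 ≤ |θ u₂ - θ u₁| := by
    rw [← hk]
    rw [zsmul_eq_mul, mul_one, ← Int.cast_abs]
    exact_mod_cast Int.one_le_abs hk0
  have himage : ∃ m : ℝ, Icc m (m+1) ⊆ θ '' (Icc u₁ u₂) := by
    rcases le_total (θ u₁) (θ u₂) with h | h
    · refine ⟨θ u₁, subset_trans (Icc_subset_Icc (le_refl _) ?_)
        (intermediate_value_Icc h12.le hθc)⟩
      rw [abs_of_nonneg (by linarith)] at hgap
      linarith
    · refine ⟨θ u₂, subset_trans (Icc_subset_Icc (le_refl _) ?_)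
        (intermediate_value_Icc' h12.le hθc)⟩
      rw [abs_of_nonpos (by linarith)] at hgap
      linarith
  obtain ⟨m, hm⟩ := himage
  apply him
  apply eq_univ_of_univ_subset
  intro z _
  have hz : z ∈ ((↑) : ℝ → 𝕊) '' (Icc m (m+1)) := by
    rw [AddCircle.coe_image_Icc_eq]
    trivial
  obtain ⟨w, hw, rfl⟩ := hz
  obtain ⟨pw, hpw, hpweq⟩ := hm hw
  refine ⟨((pw : ℝ) : 𝕊), hJsubC ⟨pw, hIccJ hpw, rfl⟩, ?_⟩
  rw [← hπθ pw hpw, hpweq]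


lemma surjective_of_localHomeo {f : 𝕊 → 𝕊} (hf : Continuous f)
    (hlocal : IsLocalHomeomorph f) : Surjective f := by
  haveI : Fact ((0:ℝ) < 1) := ⟨one_pos⟩
  have h1 : IsClosed (range f) := (isCompact_range hf).isClosed
  have h2 : IsOpen (range f) := hlocal.isOpenMap.isOpen_range
  have h3 := IsClopen.eq_univ ⟨h1, h2⟩ (range_nonempty f)
  exact range_eq_univ.mp h3

lemma exists_two_preimages {f : 𝕊 → 𝕊} (hf : Continuous f)
    (hlocal : IsLocalHomeomorph f) (hninj : ¬ Injective f) :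
    ∀ y : 𝕊, ∃ a b : 𝕊, a ≠ b ∧ f a = y ∧ f b = y := by
  haveI : Fact ((0:ℝ) < 1) := ⟨one_pos⟩
  have hsurj := surjective_of_localHomeo hf hlocal
  set P : Set 𝕊 := {y | ∃ a b : 𝕊, a ≠ b ∧ f a = y ∧ f b = y} with hP
  have hPopen : IsOpen P := by
    rw [isOpen_iff_mem_nhds]
    rintro y ⟨a, b, hab, ha, hb⟩
    obtain ⟨Va, Vb, hVa, hVb, haV, hbV, hVdisj⟩ := t2_separation hab
    have hsub : f '' Va ∩ f '' Vb ⊆ P := by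
      rintro z ⟨⟨a', ha', rfl⟩, ⟨b', hb', hz⟩⟩
      refine ⟨a', b', ?_, rfl, hz⟩
      intro h
      rw [h] at ha'
      exact (disjoint_left.mp hVdisj ha') hb'
    refine Filter.mem_of_superset ?_ hsub
    exact IsOpen.mem_nhds ((hlocal.isOpenMap Va hVa).inter (hlocal.isOpenMap Vb hVb))
      ⟨⟨a, haV, ha⟩, ⟨b, hbV, hb⟩⟩
  have hPclosed : IsClosed P := by
    rw [← isOpen_compl_iff, isOpen_iff_mem_nhds]
    intro y hy
    obtain ⟨v, hv⟩ := hsurj y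
    have huniq : ∀ w, f w = y → w = v := by
      intro w hw
      by_contra hwv
      exact hy ⟨w, v, hwv, hw, hv⟩
    obtain ⟨e, hve, hfe⟩ := hlocal v
    set V := f '' e.source ∩ (f '' (e.source)ᶜ)ᶜ with hV
    have hVopen : IsOpen V := by
      refine (hlocal.isOpenMap _ e.open_source).inter ?_
      exact (hf.isClosedMap _ (isClosed_compl_iff.mpr e.open_source)).isOpen_compl
    have hyV : y ∈ V := by
      refine ⟨⟨v, hve, hv⟩, ?_⟩
      rintro ⟨w, hw, hwy⟩
      exact hw (huniq w hwy ▸ hve)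
    refine Filter.mem_of_superset (hVopen.mem_nhds hyV) ?_
    rintro z ⟨hz1, hz2⟩ ⟨a, b, hab, ha, hb⟩
    have hamem : a ∈ e.source := by
      by_contra h
      exact hz2 ⟨a, h, ha⟩
    have hbmem : b ∈ e.source := by
      by_contra h
      exact hz2 ⟨b, h, hb⟩
    have : f a = f b := by rw [ha, hb]
    rw [hfe] at this
    exact hab (e.injOn hamem hbmem this)
  have hPne : P.Nonempty := by
    rw [Injective] at hninj
    push_neg at hninj
    obtain ⟨a, b, hab, hne⟩ := hninj
    exact ⟨f a, a, b, hne, rfl, hab.symm⟩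
  intro y
  have huniv := IsClopen.eq_univ ⟨hPclosed, hPopen⟩ hPne
  have : y ∈ P := huniv ▸ mem_univ y
  exact this

-- no isolated points
lemma nhdsWithin_compl_neBot (x : 𝕊) : (nhdsWithin x {x}ᶜ).NeBot := by
  haveI : Fact ((0:ℝ) < 1) := ⟨one_pos⟩
  rw [← mem_closure_iff_nhdsWithin_neBot]
  induction x using QuotientAddGroup.induction_on with | H u => ?_
  rw [Metric.mem_closure_iff]
  intro ε hε
  set d := min ε 1 / 2 with hd
  have hd0 : 0 < d := by positivity
  have hd1 : d < 1 := by
    rw [hd]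
    have : min ε 1 ≤ 1 := min_le_right _ _
    linarith
  refine ⟨((u + d : ℝ) : 𝕊), ?_, ?_⟩
  · simp only [mem_compl_iff, mem_singleton_iff]
    intro h
    have : ((u + d : ℝ) : 𝕊) - ((u:ℝ) : 𝕊) = 0 := by rw [h]; simp
    rw [← AddCircle.coe_sub] at this
    have h2 : ((d : ℝ) : 𝕊) = 0 := by
      convert this using 2
      ring
    obtain ⟨n, hn⟩ := (AddCircle.coe_eq_zero_iff (1:ℝ)).mp h2
    rw [zsmul_eq_mul, mul_one] at hn
    rcases le_or_gt n 0 with h | h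
    · have h3 : (n:ℝ) ≤ 0 := by exact_mod_cast h
      linarith
    · have h3 : (1:ℝ) ≤ (n:ℝ) := by exact_mod_cast h
      linarith
  · rw [dist_eq_norm, ← AddCircle.coe_sub]
    have : (u : ℝ) - (u + d) = -d := by ring
    rw [this]
    calc ‖((-d : ℝ) : 𝕊)‖ ≤ ‖(-d : ℝ)‖ := QuotientAddGroup.norm_mk_le_norm
      _ = d := by rw [Real.norm_eq_abs, abs_neg, abs_of_pos hd0]
      _ < ε := by
          rw [hd]
          rcases min_cases ε 1 with ⟨h1, _⟩ | ⟨h1, _⟩ <;> rw [h1] <;> linarith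

instance : LocallyConnectedSpace 𝕊 := by
  haveI : Fact ((0:ℝ) < 1) := ⟨one_pos⟩
  rw [locallyConnectedSpace_iff_subsets_isOpen_isConnected]
  intro x U hU
  induction x using QuotientAddGroup.induction_on with | H u => ?_
  obtain ⟨V, hVU, hVopen, hVmem⟩ := mem_nhds_iff.mp hU
  have : u ∈ ((↑) : ℝ → 𝕊) ⁻¹' V := hVmem
  obtain ⟨ε, hε, hball⟩ := Metric.isOpen_iff.mp (hVopen.preimage continuous_quotient_mk') u this
  rw [Real.ball_eq_Ioo] at hball
  refine ⟨((↑) : ℝ → 𝕊) '' Ioo (u - ε) (u + ε), ?_, ?_, ?_, ?_⟩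
  · exact fun z ⟨w, hw, hwz⟩ => hVU (hwz ▸ hball hw)
  · exact QuotientAddGroup.isOpenMap_coe _ isOpen_Ioo
  · exact ⟨u, ⟨by linarith, by linarith⟩, rfl⟩
  · exact (isConnected_Ioo (by linarith)).image _ continuous_quotient_mk'.continuousOn


end Statement11

open Statement11


/-- For a transitive monotone local homeomorphism of the circle (no
turning points) which is not a homeomorphism, every nonempty open interval eventually
covers every point: for each open connected `I` and each `x` there are `n > 0` and `y ∈ I`
with `fⁿ(y) = x`. -/
theorem forward_images_of_interval_cover
    (f : AddCircle (1 : ℝ) → AddCircle (1 : ℝ))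
    (hf : Continuous f) (hlocal : IsLocalHomeomorph f)
    (hninv : ¬ Function.Bijective f)
    (htrans : ∃ x₀, Dense (Set.range fun n : ℕ => f^[n] x₀)) :
    ∀ I : Set (AddCircle (1 : ℝ)), IsOpen I → IsConnected I →
      ∀ x : AddCircle (1 : ℝ), ∃ n : ℕ, 0 < n ∧ ∃ y ∈ I, f^[n] y = x := by
  classical
  haveI : Fact ((0:ℝ) < 1) := ⟨one_pos⟩
  haveI : ∀ x : AddCircle (1:ℝ), (nhdsWithin x {x}ᶜ).NeBot := nhdsWithin_compl_neBot
  obtain ⟨x₀, hx₀⟩ := htrans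
  intro I hIo hIc x
  have hsurj : Surjective f := surjective_of_localHomeo hf hlocal
  have hninj : ¬ Injective f := fun h => hninv ⟨h, hsurj⟩
  have hfiter : ∀ n : ℕ, Continuous (f^[n]) := fun n => hf.iterate n
  have hOiter : ∀ n : ℕ, IsOpenMap (f^[n]) := by
    intro n
    induction n with
    | zero => exact IsOpenMap.id
    | succ n ih =>
        rw [Function.iterate_succ']
        exact hlocal.isOpenMap.comp ih
  set U : Set (AddCircle (1:ℝ)) := ⋃ n : ℕ, f^[n+1] '' I with hU
  have hUopen : IsOpen U := isOpen_iUnion fun n => hOiter (n+1) I hIo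
  have hUinv : ∀ z ∈ U, f z ∈ U := by
    intro z hz
    simp only [hU, mem_iUnion, mem_image] at hz ⊢
    obtain ⟨n, y, hy, rfl⟩ := hz
    exact ⟨n+1, y, hy, Function.iterate_succ_apply' f (n+1) y⟩
  have htail : ∀ m : ℕ, Dense ((range fun n => f^[n] x₀) \
      ((fun n => f^[n] x₀) '' {k | k < m})) :=
    fun m => hx₀.diff_finite ((finite_lt_nat m).image _)
  have hUdense : Dense U := by
    obtain ⟨z, ⟨m, hm⟩, hzI⟩ := hx₀.exists_mem_open hIo hIc.nonempty
    refine (htail (m+1)).mono ?_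
    rintro z' ⟨⟨n, rfl⟩, hnot⟩
    have hnm : m + 1 ≤ n := by
      by_contra h
      push_neg at h
      exact hnot ⟨n, h, rfl⟩
    simp only [hU, mem_iUnion, mem_image]
    have hmI : f^[m] x₀ ∈ I := by
      rw [← hm] at hzI
      exact hzI
    refine ⟨n - m - 1, f^[m] x₀, hmI, ?_⟩
    rw [← Function.iterate_add_apply]
    congr 1
    omega
  rcases eq_empty_or_nonempty Uᶜ with hK | hK
  · have hxU : x ∈ U := by
      rw [compl_empty_iff] at hK
      rw [hK]
      trivial
    simp only [hU, mem_iUnion, mem_image] at hxU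
    obtain ⟨n, y, hy, hyx⟩ := hxU
    exact ⟨n+1, n.succ_pos, y, hy, hyx⟩
  exfalso
  set K := Uᶜ with hKdef
  have hKclosed : IsClosed K := hUopen.isClosed_compl
  have hKpre : ∀ z, f z ∈ K → z ∈ K := fun z hz hzU => hz (hUinv z hzU)
  set S : ℕ → Set (AddCircle (1:ℝ)) := fun n => f^[n] ⁻¹' K with hS
  have hSanti : ∀ n, S (n+1) ⊆ S n := by
    intro n z hz
    have : f (f^[n] z) ∈ K := by
      rw [← Function.iterate_succ_apply' f n z]
      exact hz
    exact hKpre _ this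
  have hSne : ∀ n, (S n).Nonempty := by
    intro n
    obtain ⟨k, hk⟩ := hK
    obtain ⟨z, hz⟩ := (hsurj.iterate n) k
    exact ⟨z, by simp only [hS, mem_preimage, hz]; exact hk⟩
  have hSclosed : ∀ n, IsClosed (S n) := fun n => hKclosed.preimage (hfiter n)
  have hScompact : IsCompact (S 0) := (hSclosed 0).isCompact
  have hKinf := IsCompact.nonempty_iInter_of_sequence_nonempty_isCompact_isClosed
    S hSanti hSne hScompact hSclosed
  set Ki := ⋂ n, S n with hKi
  have hpre : f ⁻¹' Ki = Ki := by
    ext z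
    simp only [hKi, mem_iInter, mem_preimage, hS]
    constructor
    · intro h n
      refine hKpre _ ?_
      rw [← Function.iterate_succ_apply' f n z, Function.iterate_succ_apply]
      exact h n
    · intro h n
      rw [← Function.iterate_succ_apply]
      exact h (n+1)
  have hKiiff : ∀ z, f z ∈ Ki ↔ z ∈ Ki := fun z => by rw [← Set.mem_preimage, hpre]
  have hKiK : Ki ⊆ K := by
    have h0 : S 0 = K := by simp [hS]
    exact h0 ▸ iInter_subset S 0
  have hKiclosed : IsClosed Ki := isClosed_iInter hSclosed
  set W := Kiᶜ with hW
  have hWopen : IsOpen W := hKiclosed.isOpen_compl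
  have hfW : ∀ z ∈ W, f z ∈ W := fun z hz hfz => hz ((hKiiff z).mp hfz)
  have hUne : U.Nonempty := by
    obtain ⟨y0, hy0⟩ := hIc.nonempty
    exact ⟨f y0, mem_iUnion.mpr ⟨0, ⟨y0, hy0, by simp⟩⟩⟩
  have horb : ∀ n, f^[n] x₀ ∈ W := by
    by_contra h
    push_neg at h
    obtain ⟨n₀, hn₀⟩ := h
    rw [hW, mem_compl_iff, not_not] at hn₀
    have hup : ∀ j, f^[n₀ + j] x₀ ∈ Ki := by
      intro j
      induction j with
      | zero => simpa using hn₀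
      | succ j ih =>
          have : f (f^[n₀ + j] x₀) ∈ Ki := (hKiiff _).mpr ih
          rwa [← Function.iterate_succ_apply' f (n₀ + j) x₀, ← Nat.add_succ] at this
    have hsubKi : (range fun n => f^[n] x₀) \ ((fun n => f^[n] x₀) '' {k | k < n₀}) ⊆ Ki := by
      rintro z ⟨⟨n, rfl⟩, hnot⟩
      have hn : n₀ ≤ n := by
        by_contra h'
        push_neg at h'
        exact hnot ⟨n, h', rfl⟩
      have := hup (n - n₀)
      rwa [Nat.add_sub_cancel' hn] at this
    have hdKi : Dense Ki := (htail n₀).mono hsubKi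
    have hKiuniv : Ki = univ := by
      rw [← hKiclosed.closure_eq]
      exact hdKi.closure_eq
    obtain ⟨z, hz⟩ := hUne
    exact hKiK (hKiuniv ▸ mem_univ z) hz
  have hKine : Ki.Nonempty := hKinf
  set c : ℕ → Set (AddCircle (1:ℝ)) := fun n => connectedComponentIn W (f^[n] x₀) with hc
  have hcmem : ∀ n, f^[n] x₀ ∈ c n := fun n => mem_connectedComponentIn (horb n)
  have hcnext : ∀ n, f '' c n ⊆ c (n+1) := by
    intro n
    have h1 : IsPreconnected (f '' c n) :=
      isPreconnected_connectedComponentIn.image f hf.continuousOn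
    have h2 : f '' c n ⊆ W := by
      rintro z ⟨w, hw, rfl⟩
      exact hfW w (connectedComponentIn_subset W _ hw)
    have h3 : f^[n+1] x₀ ∈ f '' c n :=
      ⟨f^[n] x₀, hcmem n, (Function.iterate_succ_apply' f n x₀).symm⟩
    exact h1.subset_connectedComponentIn h3 h2
  have hinjC : ∀ v ∈ W, InjOn f (connectedComponentIn W v) := by
    intro v hv
    refine injOn_of_image_ne_univ hf hlocal hWopen.connectedComponentIn
      isPreconnected_connectedComponentIn ?_
    intro h
    obtain ⟨k, hk⟩ := hKine
    have : k ∈ f '' connectedComponentIn W v := h ▸ mem_univ k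
    obtain ⟨w, hw, rfl⟩ := this
    exact (hfW w (connectedComponentIn_subset W v hw)) hk
  have hdet : ∀ a b : ℕ, c a = c b → c (a+1) = c (b+1) := by
    intro a b hab
    have hw : f^[a+1] x₀ ∈ c (b+1) := by
      have h1 : f^[a+1] x₀ ∈ f '' c a :=
        ⟨f^[a] x₀, hcmem a, (Function.iterate_succ_apply' f a x₀).symm⟩
      rw [hab] at h1
      exact hcnext b h1
    exact (connectedComponentIn_eq hw).symm
  have hcomp : ∀ v ∈ W, ∃ n, connectedComponentIn W v = c n := by
    intro v hv
    obtain ⟨z, ⟨n, rfl⟩, hz⟩ := hx₀.exists_mem_open hWopen.connectedComponentIn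
      ⟨v, mem_connectedComponentIn hv⟩
    exact ⟨n, connectedComponentIn_eq hz⟩
  have hpre2 : ∀ m : ℕ, ∃ k k' : ℕ, c (k+1) = c m ∧ c (k'+1) = c m ∧ c k ≠ c k' := by
    intro m
    obtain ⟨a, b, hab, ha, hb⟩ := exists_two_preimages hf hlocal hninj (f^[m] x₀)
    have haW : a ∈ W := by
      intro haKi
      exact (horb m) (ha ▸ (hKiiff a).mpr haKi)
    have hbW : b ∈ W := by
      intro hbKi
      exact (horb m) (hb ▸ (hKiiff b).mpr hbKi)
    obtain ⟨k, hk⟩ := hcomp a haW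
    obtain ⟨k', hk'⟩ := hcomp b hbW
    refine ⟨k, k', ?_, ?_, ?_⟩
    · have h1 : f^[m] x₀ ∈ f '' connectedComponentIn W a :=
        ⟨a, mem_connectedComponentIn haW, ha⟩
      rw [hk] at h1
      exact connectedComponentIn_eq (hcnext k h1)
    · have h1 : f^[m] x₀ ∈ f '' connectedComponentIn W b :=
        ⟨b, mem_connectedComponentIn hbW, hb⟩
      rw [hk'] at h1
      exact connectedComponentIn_eq (hcnext k' h1)
    · intro hkk'
      have hbmem : b ∈ connectedComponentIn W a := by
        have : connectedComponentIn W a = connectedComponentIn W b := by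
          rw [hk, hkk', ← hk']
        rw [this]
        exact mem_connectedComponentIn hbW
      exact hab (hinjC a haW (mem_connectedComponentIn haW) hbmem (ha.trans hb.symm))
  by_cases hrep : ∃ a b : ℕ, a < b ∧ c a = c b
  · obtain ⟨a0, b0, hab0, heq0⟩ := hrep
    have hshift : ∀ i, c (a0 + i) = c (b0 + i) := by
      intro i
      induction i with
      | zero => simpa using heq0
      | succ i ih =>
          have h' := hdet _ _ ih
          convert h' using 2 <;> omega
    have hcyc : ∀ k, ∃ j, j < b0 ∧ c k = c j := by
      intro k
      induction k using Nat.strong_induction_on with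
      | _ k IH =>
        rcases lt_or_ge k b0 with h | h
        · exact ⟨k, h, rfl⟩
        · have hkeq : b0 + (k - b0) = k := by omega
          have h1 : c k = c (a0 + (k - b0)) := by
            rw [hshift (k - b0), hkeq]
          have h2 : a0 + (k - b0) < k := by omega
          obtain ⟨j, hj, hj2⟩ := IH _ h2
          exact ⟨j, hj, h1.trans hj2⟩
    set T : Finset (Set (AddCircle (1:ℝ))) := (Finset.range b0).image c with hT
    have hb0pos : 0 < b0 := lt_of_le_of_lt (Nat.zero_le a0) hab0
    have hTne : T.Nonempty :=
      ⟨c 0, Finset.mem_image.mpr ⟨0, Finset.mem_range.mpr hb0pos, rfl⟩⟩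
    have hmemT : ∀ k, c k ∈ T := by
      intro k
      obtain ⟨j, hj, hj2⟩ := hcyc k
      exact Finset.mem_image.mpr ⟨j, Finset.mem_range.mpr hj, hj2.symm⟩
    set σ : Set (AddCircle (1:ℝ)) → Set (AddCircle (1:ℝ)) :=
      fun C => if h : ∃ n, C = c n then c (h.choose + 1) else ∅ with hσ
    have hσc : ∀ n, σ (c n) = c (n+1) := by
      intro n
      have hex : ∃ m, c n = c m := ⟨n, rfl⟩
      simp only [hσ, dif_pos hex]
      exact (hdet _ _ hex.choose_spec).symm
    have hmaps : ∀ C ∈ T, σ C ∈ T := by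
      intro C hC
      obtain ⟨j, _, rfl⟩ := Finset.mem_image.mp hC
      rw [hσc]
      exact hmemT _
    have hcount := Finset.card_eq_sum_card_fiberwise hmaps
    have hfib : ∀ C ∈ T, 2 ≤ (T.filter (fun D => σ D = C)).card := by
      intro C hC
      obtain ⟨j, hj, rfl⟩ := Finset.mem_image.mp hC
      obtain ⟨k, k', h1, h2, h3⟩ := hpre2 j
      have hk : c k ∈ T.filter (fun D => σ D = c j) :=
        Finset.mem_filter.mpr ⟨hmemT k, by rw [hσc]; exact h1⟩
      have hk' : c k' ∈ T.filter (fun D => σ D = c j) :=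
        Finset.mem_filter.mpr ⟨hmemT k', by rw [hσc]; exact h2⟩
      exact Finset.one_lt_card.mpr ⟨c k, hk, c k', hk', h3⟩
    have hle : 2 * T.card ≤ T.card := by
      calc 2 * T.card = ∑ _C ∈ T, 2 := by
            rw [Finset.sum_const, smul_eq_mul, mul_comm]
        _ ≤ ∑ C ∈ T, (T.filter (fun D => σ D = C)).card := Finset.sum_le_sum hfib
        _ = T.card := hcount.symm
    have := hTne.card_pos
    omega
  · obtain ⟨k, k', h1, h2, h3⟩ := hpre2 0
    exact hrep ⟨0, k+1, k.succ_pos, h1.symm⟩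
end

section
/- Let f: S¹ → S¹ be a transitive orientation-preserving non-invertible local homeomorphism of the circle with increasing lift F, and let f_t be the circle map lifted by F_t(x) = F(x)+t. Then for every ε > 0 and x ∈ S¹ there exist n ∈ ℕ and 0 < t < ε such that f_t^n(x) = x. -/
open Set Function

namespace PMHPPAux

lemma coeZ (w : ℝ) (k : ℤ) : ((w + k : ℝ) : AddCircle (1:ℝ)) = (w : AddCircle (1:ℝ)) := by
  show (QuotientAddGroup.mk _ : AddCircle (1:ℝ)) = QuotientAddGroup.mk _
  rw [QuotientAddGroup.eq]
  refine AddSubgroup.mem_zmultiples_iff.mpr ⟨-k, ?_⟩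
  rw [zsmul_eq_mul]
  push_cast
  ring

lemma coe_inj {w w' : ℝ} (h : (w : AddCircle (1:ℝ)) = (w' : AddCircle (1:ℝ))) :
    ∃ k : ℤ, w' = w + k := by
  rw [show ((w : AddCircle (1:ℝ))) = QuotientAddGroup.mk w from rfl,
    show ((w' : AddCircle (1:ℝ))) = QuotientAddGroup.mk w' from rfl,
    QuotientAddGroup.eq] at h
  obtain ⟨k, hk⟩ := AddSubgroup.mem_zmultiples_iff.mp h
  rw [zsmul_eq_mul, mul_one] at hk
  exact ⟨k, by linarith⟩

section
variable {F : ℝ → ℝ} {d : ℤ}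

lemma degZ (hdeg : ∀ x : ℝ, F (x + 1) = F x + d) : ∀ (x : ℝ) (k : ℤ), F (x + k) = F x + k * d := by
  intro x k
  induction k using Int.induction_on with
  | zero => simp
  | succ n ih =>
      have h1 : F (x + n + 1) = F (x + n) + d := hdeg (x + n)
      push_cast at ih h1 ⊢
      rw [show x + ((n:ℝ) + 1) = x + n + 1 by ring, h1, ih]
      ring
  | pred n ih =>
      have h1 : F (x + (-(n:ℤ) - 1 : ℤ) + 1) = F (x + (-(n:ℤ) - 1 : ℤ)) + d := hdeg _
      have h2 : x + ((-(n:ℤ) - 1 : ℤ) : ℝ) + 1 = x + (-(n:ℤ) : ℤ) := by push_cast; ring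
      rw [h2, ih] at h1
      push_cast at h1 ⊢
      linarith

lemma iterZ (hdeg : ∀ x : ℝ, F (x + 1) = F x + d) :
    ∀ (m : ℕ) (x : ℝ) (k : ℤ), F^[m] (x + k) = F^[m] x + k * d ^ m := by
  intro m
  induction m with
  | zero => intro x k; simp
  | succ m ih =>
      intro x k
      rw [Function.iterate_succ_apply, Function.iterate_succ_apply]
      have h1 : F (x + k) = F x + (k * d : ℤ) := by rw [degZ hdeg]; push_cast; ring
      rw [h1]
      have := ih (F x) (k * d)
      rw [this]
      push_cast; ring

lemma Fsurj (hFc : Continuous F) (hFm : StrictMono F) (hd : 2 ≤ d)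
    (hdeg : ∀ x : ℝ, F (x + 1) = F x + d) : Function.Surjective F := by
  intro y
  have hd0 : (0:ℝ) < d := by exact_mod_cast lt_of_lt_of_le (by norm_num) hd
  set n₁ : ℤ := ⌊(y - F 0) / d⌋ with hn₁
  set n₂ : ℤ := ⌈(y - F 0) / d⌉ with hn₂
  have hF1 : F (n₁ : ℝ) = F 0 + n₁ * d := by
    have := degZ hdeg 0 n₁; simpa using this
  have hF2 : F (n₂ : ℝ) = F 0 + n₂ * d := by
    have := degZ hdeg 0 n₂; simpa using this
  have hcancel : (y - F 0) / d * d = y - F 0 := div_mul_cancel₀ _ (ne_of_gt hd0)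
  have hle1 : F (n₁ : ℝ) ≤ y := by
    rw [hF1]
    have h := mul_le_mul_of_nonneg_right (Int.floor_le ((y - F 0) / d)) (le_of_lt hd0)
    rw [hcancel] at h
    linarith
  have hle2 : y ≤ F (n₂ : ℝ) := by
    rw [hF2]
    have h := mul_le_mul_of_nonneg_right (Int.le_ceil ((y - F 0) / d)) (le_of_lt hd0)
    rw [hcancel] at h
    linarith
  have hn12 : (n₁ : ℝ) ≤ (n₂ : ℝ) := by exact_mod_cast Int.floor_le_ceil _
  have := intermediate_value_Icc hn12 hFc.continuousOn (a := (n₁:ℝ)) (b := (n₂:ℝ))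
  obtain ⟨x, _, hx⟩ := this ⟨hle1, hle2⟩
  exact ⟨x, hx⟩

end
end PMHPPAux


open Set Function

namespace PMHPPAux2

def LEp (Ws : Set ℝ) (x z : ℝ) : Prop := x ∉ Ws ∧ x < z ∧ Set.Ioo x z ⊆ Ws

lemma covering
    (f : AddCircle (1 : ℝ) → AddCircle (1 : ℝ))
    (F : ℝ → ℝ) (hFc : Continuous F) (hFm : StrictMono F)
    (d : ℤ) (hd : 2 ≤ d) (hdeg : ∀ x : ℝ, F (x + 1) = F x + d)
    (hlift : ∀ x : ℝ, f (x : AddCircle (1 : ℝ)) = (F x : AddCircle (1 : ℝ)))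
    (htrans : ∃ x₀, Dense (Set.range fun n : ℕ => f^[n] x₀))
    (degZ : ∀ (x : ℝ) (k : ℤ), F (x + k) = F x + k * d)
    (iterZ : ∀ (m : ℕ) (x : ℝ) (k : ℤ), F^[m] (x + k) = F^[m] x + k * d ^ m)
    (hsurj : Function.Surjective F)
    (coeZ : ∀ (w : ℝ) (k : ℤ), ((w + k : ℝ) : AddCircle (1:ℝ)) = (w : AddCircle (1:ℝ)))
    (coe_inj : ∀ {w w' : ℝ}, ((w : AddCircle (1:ℝ)) = (w' : AddCircle (1:ℝ))) → ∃ k : ℤ, w' = w + k)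
    (x₀ a b : ℝ) (hab : a < b) :
    ∃ (m : ℕ) (z : ℝ) (k : ℤ), z ∈ Set.Ioo a b ∧ F^[m] z = x₀ + k := by
  by_contra hC
  push_neg at hC
  have hFmm : ∀ m : ℕ, StrictMono (F^[m]) := fun m => hFm.iterate m
  have hsurjm : ∀ m : ℕ, Function.Surjective (F^[m]) := fun m => hsurj.iterate m
  set E := StrictMono.orderIsoOfSurjective F hFm hsurj with hEdef
  have hE : ∀ x, E x = F x := fun x => rfl
  have hEsx : ∀ x, F (E.symm x) = x := fun x => by
    have := E.apply_symm_apply x; rwa [hE] at this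
  have hEsmono : StrictMono (⇑E.symm) := E.symm.strictMono
  -- lift of the transitive point
  obtain ⟨xc, hdense⟩ := htrans
  obtain ⟨y, hy⟩ := QuotientAddGroup.mk_surjective xc
  have hfit : ∀ (n : ℕ) (w : ℝ), f^[n] (w : AddCircle (1:ℝ)) = ((F^[n] w : ℝ) : AddCircle (1:ℝ)) := by
    intro n
    induction n with
    | zero => intro w; simp
    | succ n ih =>
        intro w
        rw [Function.iterate_succ_apply', ih, hlift, Function.iterate_succ_apply' F n w]
  -- density of the full orbit in ℝ
  have hD : ∀ u v : ℝ, u < v → ∃ (m : ℕ) (k : ℤ), F^[m] y + k ∈ Ioo u v := by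
    intro u v huv
    have hopen : IsOpen ((QuotientAddGroup.mk : ℝ → AddCircle (1:ℝ)) '' Ioo u v) :=
      QuotientAddGroup.isOpenMap_coe _ isOpen_Ioo
    have hne : ((QuotientAddGroup.mk : ℝ → AddCircle (1:ℝ)) '' Ioo u v).Nonempty :=
      (nonempty_Ioo.mpr huv).image _
    obtain ⟨p, hp1, hp2⟩ := hdense.exists_mem_open hopen hne
    obtain ⟨n, hn⟩ := hp1
    obtain ⟨w, hw, hw2⟩ := hp2
    have hcc : ((F^[n] y : ℝ) : AddCircle (1:ℝ)) = (w : AddCircle (1:ℝ)) := by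
      rw [← hfit]
      have hyc : (y : AddCircle (1:ℝ)) = xc := hy
      rw [hyc]
      have hw2' : (w : AddCircle (1:ℝ)) = p := hw2
      rw [hw2', ← hn]
    obtain ⟨k, hk⟩ := coe_inj hcc
    exact ⟨n, k, by rw [← hk]; exact hw⟩
  -- lattices are closed
  have hClat : ∀ c : ℝ, IsClosed {w : ℝ | ∃ k : ℤ, w = c + k} := by
    intro c
    have hs : {w : ℝ | ∃ k : ℤ, w = c + k} = (fun w => w - c) ⁻¹' (Set.range ((↑) : ℤ → ℝ)) := by
      ext w
      simp only [mem_setOf_eq, mem_preimage, Set.mem_range]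
      constructor
      · rintro ⟨k, rfl⟩; exact ⟨k, by ring⟩
      · rintro ⟨k, hk⟩; exact ⟨k, by linarith⟩
    rw [hs]
    exact Int.isClosedEmbedding_coe_real.isClosed_range.preimage (continuous_sub_right c)
  -- tail density
  have hDtail : ∀ (j : ℕ) (u v : ℝ), u < v → ∃ (m : ℕ) (k : ℤ), j ≤ m ∧ F^[m] y + k ∈ Ioo u v := by
    intro j u v huv
    set Sbad : Set ℝ := ⋃ i ∈ Finset.range j, {w : ℝ | ∃ k : ℤ, w = F^[i] y + k} with hSbaddef
    have hSbadc : Sbad.Countable := by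
      refine Set.Countable.biUnion (Finset.range j).countable_toSet (fun i _ => ?_)
      have : {w : ℝ | ∃ k : ℤ, w = F^[i] y + k} = Set.range (fun k : ℤ => F^[i] y + (k:ℝ)) := by
        ext w; simp [eq_comm]
      rw [this]
      exact Set.countable_range _
    have hSbadcl : IsClosed Sbad :=
      Set.Finite.isClosed_biUnion (Finset.range j).finite_toSet (fun i _ => hClat _)
    have hunct : ¬ (Ioo u v).Countable := by
      intro h
      have h1 : Cardinal.mk (Ioo u v) ≤ Cardinal.aleph0 := by
        have := Set.countable_coe_iff.mpr h
        exact Cardinal.mk_le_aleph0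
      rw [Cardinal.mk_Ioo_real huv] at h1
      exact absurd h1 (not_le.mpr Cardinal.aleph0_lt_continuum)
    have hex : ∃ w₀, w₀ ∈ Ioo u v ∩ Sbadᶜ := by
      by_contra h
      push_neg at h
      refine hunct (hSbadc.mono (fun w hw => ?_))
      by_contra hns
      exact h w ⟨hw, hns⟩
    have hopen2 : IsOpen (Ioo u v ∩ Sbadᶜ) := isOpen_Ioo.inter hSbadcl.isOpen_compl
    obtain ⟨u', v', hu'v', hsub⟩ := hopen2.exists_Ioo_subset hex
    obtain ⟨m, k, hmk⟩ := hD u' v' hu'v'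
    have hmem := hsub hmk
    refine ⟨m, k, ?_, hmem.1⟩
    by_contra hlt
    push_neg at hlt
    exact hmem.2 (Set.mem_biUnion (Finset.mem_coe.mpr (Finset.mem_range.mpr hlt)) ⟨k, rfl⟩)
  -- the open set W
  set W : Set ℝ := ⋃ (m : ℕ), ⋃ (k : ℤ), (fun w : ℝ => w + (k:ℝ)) ⁻¹' Ioo (F^[m] a) (F^[m] b) with hWdef
  have hWmem : ∀ w : ℝ, w ∈ W ↔ ∃ (m : ℕ) (k : ℤ), w + (k:ℝ) ∈ Ioo (F^[m] a) (F^[m] b) := by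
    intro w
    simp only [hWdef, Set.mem_iUnion, Set.mem_preimage]
  have hWopen : IsOpen W :=
    isOpen_iUnion fun m => isOpen_iUnion fun k => isOpen_Ioo.preimage (continuous_add_right _)
  have hx₀ : ∀ j : ℤ, x₀ + (j:ℝ) ∉ W := by
    intro j hjW
    obtain ⟨m, k, hm⟩ := (hWmem _).mp hjW
    obtain ⟨z, hz⟩ := hsurjm m (x₀ + j + k)
    have hz1 : a < z := (hFmm m).lt_iff_lt.mp (by rw [hz]; exact hm.1)
    have hz2 : z < b := (hFmm m).lt_iff_lt.mp (by rw [hz]; exact hm.2)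
    exact hC m z (j + k) ⟨hz1, hz2⟩ (by rw [hz]; push_cast; ring)
  have hWF : ∀ w ∈ W, F w ∈ W := by
    intro w hw
    obtain ⟨m, k, hm⟩ := (hWmem w).mp hw
    refine (hWmem _).mpr ⟨m + 1, k * d, ?_⟩
    have h1 : F w + ((k * d : ℤ) : ℝ) = F (w + k) := by rw [degZ]; push_cast; ring
    rw [h1, Function.iterate_succ_apply', Function.iterate_succ_apply']
    exact ⟨hFm hm.1, hFm hm.2⟩
  have hWper : ∀ w ∈ W, ∀ j : ℤ, w + (j:ℝ) ∈ W := by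
    intro w hw j
    obtain ⟨m, k, hm⟩ := (hWmem w).mp hw
    refine (hWmem _).mpr ⟨m, k - j, ?_⟩
    have h1 : w + (j:ℝ) + ((k - j : ℤ):ℝ) = w + k := by push_cast; ring
    rw [h1]; exact hm
  have habW : Ioo a b ⊆ W := by
    intro w hw
    refine (hWmem _).mpr ⟨0, 0, ?_⟩
    simpa using hw
  -- the fully invariant open set Ws
  set Ws : Set ℝ := ⋃ m : ℕ, (F^[m]) ⁻¹' W with hWsdef
  have hWsmem : ∀ z : ℝ, z ∈ Ws ↔ ∃ m, F^[m] z ∈ W := fun z => by simp [hWsdef]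
  have hWsopen : IsOpen Ws := isOpen_iUnion fun m => hWopen.preimage (hFc.iterate m)
  have hWsub : W ⊆ Ws := fun w hw => (hWsmem w).mpr ⟨0, by simpa using hw⟩
  have hWsF : ∀ z : ℝ, z ∈ Ws ↔ F z ∈ Ws := by
    intro z
    constructor
    · intro hz
      obtain ⟨m, hm⟩ := (hWsmem z).mp hz
      refine (hWsmem _).mpr ⟨m, ?_⟩
      rw [← Function.iterate_succ_apply, Function.iterate_succ_apply']
      exact hWF _ hm
    · intro hz
      obtain ⟨m, hm⟩ := (hWsmem _).mp hz
      rw [← Function.iterate_succ_apply] at hm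
      exact (hWsmem z).mpr ⟨m+1, hm⟩
  have hWsper : ∀ z ∈ Ws, ∀ j : ℤ, z + (j:ℝ) ∈ Ws := by
    intro z hz j
    obtain ⟨m, hm⟩ := (hWsmem z).mp hz
    refine (hWsmem _).mpr ⟨m, ?_⟩
    rw [iterZ, show ((j:ℝ) * (d:ℝ)^m) = ((j * d^m : ℤ):ℝ) by push_cast; ring]
    exact hWper _ hm _
  have hAsF : ∀ z : ℝ, z ∉ Ws ↔ F z ∉ Ws := fun z => not_congr (hWsF z)
  have hAsper : ∀ z : ℝ, z ∉ Ws → ∀ j : ℤ, z + (j:ℝ) ∉ Ws := by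
    intro z hz j hc
    apply hz
    have h2 := hWsper _ hc (-j)
    rw [show z + (j:ℝ) + ((-j:ℤ):ℝ) = z by push_cast; ring] at h2
    exact h2
  -- complement of Ws is nonempty
  have hAsne : ∃ ζ : ℝ, ζ ∉ Ws := by
    set t : ℕ → Set ℝ := fun m => (F^[m]) ⁻¹' Wᶜ ∩ Icc 0 1 with htdef
    have hcl : ∀ i, IsClosed (t i) := fun i =>
      (hWopen.isClosed_compl.preimage (hFc.iterate i)).inter isClosed_Icc
    have hdec : ∀ i, t (i+1) ⊆ t i := by
      rintro i z ⟨hz1, hz2⟩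
      refine ⟨fun hc => hz1 ?_, hz2⟩
      show F^[i+1] z ∈ W
      rw [Function.iterate_succ_apply']
      exact hWF _ hc
    have hne : ∀ i, (t i).Nonempty := by
      intro i
      obtain ⟨z, hz⟩ := hsurjm i x₀
      refine ⟨Int.fract z, fun hc => ?_, Int.fract_nonneg z, le_of_lt (Int.fract_lt_one z)⟩
      have hfr : Int.fract z = z + ((-⌊z⌋ : ℤ) : ℝ) := by rw [Int.fract]; push_cast; ring
      rw [hfr, iterZ, hz] at hc
      apply hx₀ (-⌊z⌋ * d^i)
      rw [show ((-⌊z⌋ * d^i : ℤ):ℝ) = ((-⌊z⌋:ℤ):ℝ) * (d:ℝ)^i by push_cast; ring]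
      exact hc
    have hcomp : IsCompact (t 0) := IsCompact.of_isClosed_subset isCompact_Icc (hcl 0) inter_subset_right
    obtain ⟨ζ, hζ⟩ := IsCompact.nonempty_iInter_of_sequence_nonempty_isCompact_isClosed t hdec hne hcomp hcl
    refine ⟨ζ, fun hc => ?_⟩
    obtain ⟨m, hm⟩ := (hWsmem ζ).mp hc
    exact (Set.mem_iInter.mp hζ m).1 hm
  obtain ⟨ζ₀, hζ₀⟩ := hAsne
  -- existence of left endpoints
  have hLEex : ∀ z ∈ Ws, ∃ x, LEp Ws x z := by
    intro z hz
    set s : Set ℝ := Wsᶜ ∩ Iic z with hsdef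
    have hscl : IsClosed s := hWsopen.isClosed_compl.inter isClosed_Iic
    have hsne : s.Nonempty := by
      refine ⟨ζ₀ + ((-⌈ζ₀ - z⌉ : ℤ):ℝ), hAsper _ hζ₀ _, ?_⟩
      have h1 := Int.le_ceil (ζ₀ - z)
      simp only [mem_Iic]
      push_cast
      linarith
    have hsbdd : BddAbove s := ⟨z, fun w hw => hw.2⟩
    have hxmem := hscl.csSup_mem hsne hsbdd
    refine ⟨sSup s, hxmem.1, ?_, ?_⟩
    · rcases eq_or_lt_of_le (mem_Iic.mp hxmem.2) with h | h
      · exact absurd (h ▸ hz) hxmem.1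
      · exact h
    · intro w hw
      by_contra hc
      have hws : w ∈ s := ⟨hc, le_of_lt hw.2⟩
      exact absurd (le_csSup hsbdd hws) (not_le.mpr hw.1)
  have hLEuniq : ∀ {x x' z : ℝ}, LEp Ws x z → LEp Ws x' z → x = x' := by
    intro x x' z h1 h2
    rcases lt_trichotomy x x' with h | h | h
    · exact absurd (h1.2.2 ⟨h, h2.2.1⟩) h2.1
    · exact h
    · exact absurd (h2.2.2 ⟨h, h1.2.1⟩) h1.1
  have hLEF : ∀ {x z : ℝ}, LEp Ws x z → LEp Ws (F x) (F z) := by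
    intro x z h
    refine ⟨(hAsF x).mp h.1, hFm h.2.1, ?_⟩
    intro w hw
    have h1 : x < E.symm w := hFm.lt_iff_lt.mp (by rw [hEsx]; exact hw.1)
    have h2 : E.symm w < z := hFm.lt_iff_lt.mp (by rw [hEsx]; exact hw.2)
    have h3 := h.2.2 ⟨h1, h2⟩
    rw [← hEsx w]
    exact ((hWsF _).mp h3)
  have hLEFinv : ∀ {x z : ℝ}, LEp Ws x z → LEp Ws (E.symm x) (E.symm z) := by
    intro x z h
    refine ⟨?_, hEsmono h.2.1, ?_⟩
    · exact (hAsF _).mpr (by rw [hEsx]; exact h.1)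
    · intro w hw
      have h1 : x < F w := by rw [← hEsx x]; exact hFm hw.1
      have h2 : F w < z := by rw [← hEsx z]; exact hFm hw.2
      exact (hWsF w).mpr (h.2.2 ⟨h1, h2⟩)
  have hLEper : ∀ {x z : ℝ}, LEp Ws x z → ∀ j : ℤ, LEp Ws (x + (j:ℝ)) (z + (j:ℝ)) := by
    intro x z h j
    refine ⟨hAsper _ h.1 j, by have := h.2.1; linarith, ?_⟩
    intro w hw
    have h1 : w - (j:ℝ) ∈ Ioo x z := ⟨by have := hw.1; linarith, by have := hw.2; linarith⟩
    have h2 := hWsper _ (h.2.2 h1) j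
    rw [show w - (j:ℝ) + (j:ℝ) = w by ring] at h2
    exact h2
  have hLEiter : ∀ {x z : ℝ}, LEp Ws x z → ∀ m : ℕ, LEp Ws (F^[m] x) (F^[m] z) := by
    intro x z h m
    induction m with
    | zero => simpa using h
    | succ m ih =>
        rw [Function.iterate_succ_apply', Function.iterate_succ_apply']
        exact hLEF ih
  -- base orbit point inside Ws
  obtain ⟨j₀, k₀, hy1mem⟩ := hD a b hab
  have hy1Ws : F^[j₀] y + (k₀:ℝ) ∈ Ws := hWsub (habW hy1mem)
  obtain ⟨xy, hxy⟩ := hLEex _ hy1Ws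
  have hchain : ∀ ξ z : ℝ, z ∈ Ws → LEp Ws ξ z →
      ∃ i : ℕ, f^[i] (xy : AddCircle (1:ℝ)) = (ξ : AddCircle (1:ℝ)) := by
    intro ξ z hzWs hLE
    obtain ⟨m, k, hjm, hq⟩ := hDtail j₀ ξ z hLE.2.1
    have him : (m - j₀) + j₀ = m := Nat.sub_add_cancel hjm
    set i := m - j₀ with hidef
    have hLE1 : LEp Ws ξ (F^[m] y + (k:ℝ)) :=
      ⟨hLE.1, hq.1, fun w hw => hLE.2.2 ⟨hw.1, lt_trans hw.2 hq.2⟩⟩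
    have hLE2 : LEp Ws (F^[i] xy) (F^[i] (F^[j₀] y + (k₀:ℝ))) := hLEiter hxy i
    have hFiy1 : F^[i] (F^[j₀] y + (k₀:ℝ)) = F^[m] y + (k₀:ℝ) * (d:ℝ)^i := by
      rw [iterZ, ← Function.iterate_add_apply, him]
    set k' : ℤ := k - k₀ * d^i with hk'def
    have hLE3 : LEp Ws (F^[i] xy + (k':ℝ)) (F^[m] y + (k:ℝ)) := by
      have h4 := hLEper hLE2 k'
      rw [hFiy1] at h4
      rw [show F^[m] y + (k₀:ℝ) * (d:ℝ)^i + (k':ℝ) = F^[m] y + (k:ℝ) by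
        rw [hk'def]; push_cast; ring] at h4
      exact h4
    have hxieq : ξ = F^[i] xy + (k':ℝ) := hLEuniq hLE1 hLE3
    refine ⟨i, ?_⟩
    rw [hfit, hxieq]
    exact (coeZ _ k').symm
  -- two distinct preimages of xy's class
  have hΛ1 : ∃ i : ℕ, f^[i] (xy : AddCircle (1:ℝ)) = ((E.symm xy : ℝ) : AddCircle (1:ℝ)) := by
    refine hchain _ (E.symm (F^[j₀] y + (k₀:ℝ))) ?_ (hLEFinv hxy)
    exact (hWsF _).mpr (by rw [hEsx]; exact hy1Ws)
  have hΛ2 : ∃ i : ℕ, f^[i] (xy : AddCircle (1:ℝ)) = ((E.symm (xy + 1) : ℝ) : AddCircle (1:ℝ)) := by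
    have h1 : LEp Ws (xy + 1) (F^[j₀] y + (k₀:ℝ) + 1) := by
      have := hLEper hxy 1
      simpa using this
    have h2 : F^[j₀] y + (k₀:ℝ) + 1 ∈ Ws := by
      have := hWsper _ hy1Ws 1
      simpa using this
    exact hchain _ (E.symm (F^[j₀] y + (k₀:ℝ) + 1)) ((hWsF _).mpr (by rw [hEsx]; exact h2)) (hLEFinv h1)
  obtain ⟨m₁, hm₁⟩ := hΛ1
  obtain ⟨m₂, hm₂⟩ := hΛ2
  have hfp₁ : f ((E.symm xy : ℝ) : AddCircle (1:ℝ)) = (xy : AddCircle (1:ℝ)) := by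
    rw [hlift, hEsx]
  have hfp₂ : f ((E.symm (xy + 1) : ℝ) : AddCircle (1:ℝ)) = (xy : AddCircle (1:ℝ)) := by
    rw [hlift, hEsx, show (xy + 1 : ℝ) = xy + ((1:ℤ):ℝ) by push_cast; ring, coeZ]
  have hper₁ : f^[m₁ + 1] (xy : AddCircle (1:ℝ)) = (xy : AddCircle (1:ℝ)) := by
    rw [Function.iterate_succ_apply', hm₁, hfp₁]
  have hper₂ : f^[m₂ + 1] (xy : AddCircle (1:ℝ)) = (xy : AddCircle (1:ℝ)) := by
    rw [Function.iterate_succ_apply', hm₂, hfp₂]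
  have hpp : ((E.symm xy : ℝ) : AddCircle (1:ℝ)) = ((E.symm (xy + 1) : ℝ) : AddCircle (1:ℝ)) := by
    rw [← hm₁, ← hm₂]
    calc f^[m₁] (xy : AddCircle (1:ℝ)) = f^[m₁] (f^[m₂+1] (xy : AddCircle (1:ℝ))) := by rw [hper₂]
    _ = f^[m₁ + (m₂+1)] (xy : AddCircle (1:ℝ)) := (Function.iterate_add_apply f m₁ (m₂+1) _).symm
    _ = f^[m₂ + (m₁+1)] (xy : AddCircle (1:ℝ)) := by rw [show m₁ + (m₂+1) = m₂ + (m₁+1) by omega]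
    _ = f^[m₂] (f^[m₁+1] (xy : AddCircle (1:ℝ))) := Function.iterate_add_apply f m₂ (m₁+1) _
    _ = f^[m₂] (xy : AddCircle (1:ℝ)) := by rw [hper₁]
  obtain ⟨n, hn⟩ := coe_inj hpp
  have h1 : F (E.symm xy + (n:ℝ)) = xy + (n:ℝ) * (d:ℝ) := by rw [degZ, hEsx]
  rw [← hn, hEsx] at h1
  have h2 : (n:ℝ) * (d:ℝ) = 1 := by linarith
  have h3 : n * d = 1 := by exact_mod_cast h2
  have h4 : d ≤ 1 := Int.le_of_dvd one_pos (Dvd.intro_left n h3)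
  omega

end PMHPPAux2


open Set Function

namespace PMHPPAux3

variable (F : ℝ → ℝ)

def hIt : ℕ → ℝ → ℝ → ℝ
  | 0, _, w => w
  | (n+1), t, w => F (hIt n t w) + t

variable {F}

lemma hIt_lift (f : AddCircle (1 : ℝ) → AddCircle (1 : ℝ))
    (ft : ℝ → AddCircle (1 : ℝ) → AddCircle (1 : ℝ))
    (hft : ∀ (t : ℝ) (x : ℝ), ft t (x : AddCircle (1 : ℝ)) = ((F x + t : ℝ) : AddCircle (1 : ℝ)))
    (t : ℝ) : ∀ (n : ℕ) (w : ℝ),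
    (ft t)^[n] (w : AddCircle (1:ℝ)) = ((hIt F n t w : ℝ) : AddCircle (1:ℝ)) := by
  intro n
  induction n with
  | zero => intro w; simp [hIt]
  | succ n ih =>
      intro w
      rw [Function.iterate_succ_apply', ih, hft]
      rfl

lemma hIt_zero_eq (w : ℝ) : ∀ n : ℕ, hIt F n 0 w = F^[n] w := by
  intro n
  induction n with
  | zero => simp [hIt]
  | succ n ih => rw [Function.iterate_succ_apply', ← ih]; simp [hIt]

lemma hIt_cont (hFc : Continuous F) (w : ℝ) (n : ℕ) :
    Continuous (fun t => hIt F n t w) := by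
  induction n with
  | zero => simpa [hIt] using continuous_const
  | succ n ih =>
      show Continuous (fun t => F (hIt F n t w) + t)
      exact (hFc.comp ih).add continuous_id
lemma hIt_mono_t (hFm : StrictMono F) (w : ℝ) (n : ℕ) {t t' : ℝ} (h : t ≤ t') :
    hIt F n t w ≤ hIt F n t' w := by
  induction n with
  | zero => simp [hIt]
  | succ n ih =>
      show F (hIt F n t w) + t ≤ F (hIt F n t' w) + t'
      have := hFm.monotone ih
      linarith

lemma hIt_mono_w (hFm : StrictMono F) (t : ℝ) (n : ℕ) {w w' : ℝ} (h : w < w') :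
    hIt F n t w < hIt F n t w' := by
  induction n with
  | zero => simpa [hIt] using h
  | succ n ih =>
      show F (hIt F n t w) + t < F (hIt F n t w') + t
      have := hFm ih
      linarith

lemma hIt_shift (t w : ℝ) : ∀ n : ℕ, hIt F (n+1) t w = hIt F n t (F w + t) := by
  intro n
  induction n with
  | zero => rfl
  | succ n ih =>
      show F (hIt F (n+1) t w) + t = F (hIt F n t (F w + t)) + t
      rw [ih]

end PMHPPAux3


open Set Function PMHPPAux PMHPPAux2 PMHPPAux3 in
/-- Let `f` be a transitive orientation-preserving non-invertible local
homeomorphism of the circle with strictly increasing lift `F` of degree `d ≥ 2`, and let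
`f_t` be the circle map lifted by `F_t = F + t`. Then for every `ε > 0` and every `x` there
are `n > 0` and `0 < t < ε` with `f_tⁿ(x) = x`. -/
theorem perturbed_map_has_periodic_point
    (f : AddCircle (1 : ℝ) → AddCircle (1 : ℝ))
    (F : ℝ → ℝ) (hFc : Continuous F) (hFm : StrictMono F)
    (d : ℤ) (hd : 2 ≤ d) (hdeg : ∀ x : ℝ, F (x + 1) = F x + d)
    (hlift : ∀ x : ℝ, f (x : AddCircle (1 : ℝ)) = (F x : AddCircle (1 : ℝ)))
    (htrans : ∃ x₀, Dense (Set.range fun n : ℕ => f^[n] x₀))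
    (ft : ℝ → AddCircle (1 : ℝ) → AddCircle (1 : ℝ))
    (hft : ∀ (t : ℝ) (x : ℝ), ft t (x : AddCircle (1 : ℝ)) = ((F x + t : ℝ) : AddCircle (1 : ℝ))) :
    ∀ ε > (0 : ℝ), ∀ x : AddCircle (1 : ℝ),
      ∃ n : ℕ, 0 < n ∧ ∃ t : ℝ, 0 < t ∧ t < ε ∧ (ft t)^[n] x = x := by
  intro ε hε x
  obtain ⟨x₀, hx₀⟩ := QuotientAddGroup.mk_surjective x
  have hx₀' : (x₀ : AddCircle (1:ℝ)) = x := hx₀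
  subst hx₀'
  have hsurjF : Function.Surjective F := Fsurj hFc hFm hd hdeg
  obtain ⟨m, z, k, hz, hFz⟩ :=
    covering f F hFc hFm d hd hdeg hlift htrans (degZ hdeg) (iterZ hdeg) hsurjF
      coeZ (fun h => coe_inj h) x₀ (F x₀) (F x₀ + ε) (by linarith)
  refine ⟨m + 1, Nat.succ_pos m, ?_⟩
  have hφc : ContinuousOn (fun t => hIt F (m+1) t x₀) (Icc 0 ε) :=
    (hIt_cont hFc x₀ (m+1)).continuousOn
  have hlow : hIt F (m+1) 0 x₀ < x₀ + (k:ℝ) := by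
    rw [hIt_shift, add_zero, hIt_zero_eq]
    calc F^[m] (F x₀) < F^[m] z := (hFm.iterate m) hz.1
    _ = x₀ + (k:ℝ) := hFz
  have hhigh : x₀ + (k:ℝ) < hIt F (m+1) ε x₀ := by
    rw [hIt_shift]
    calc x₀ + (k:ℝ) = F^[m] z := hFz.symm
    _ < F^[m] (F x₀ + ε) := (hFm.iterate m) hz.2
    _ = hIt F m 0 (F x₀ + ε) := (hIt_zero_eq _ m).symm
    _ ≤ hIt F m ε (F x₀ + ε) := hIt_mono_t hFm _ m (le_of_lt hε)
  obtain ⟨t, ht, hteq⟩ :=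
    intermediate_value_Ioo (le_of_lt hε) hφc (⟨hlow, hhigh⟩ : x₀ + (k:ℝ) ∈ Ioo _ _)
  refine ⟨t, ht.1, ht.2, ?_⟩
  have h1 : (ft t)^[m+1] (x₀ : AddCircle (1:ℝ)) = ((hIt F (m+1) t x₀ : ℝ) : AddCircle (1:ℝ)) :=
    hIt_lift f ft hft t (m+1) x₀
  have h2 : hIt F (m+1) t x₀ = x₀ + (k:ℝ) := hteq
  rw [h1, h2]
  exact coeZ x₀ k
end
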